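/- arXiv:1606.03954 — 7 statements merged into one kernel-verified Lean document; each statement's English description precedes it below -/
import Mathlib

section
/- Let A be a real N×N matrix all of whose complex eigenvalues have negative real part (A is Hurwitz). Then there exist constants c > 0 and α > 0 such that for all t ≥ 0, the operator norm of the matrix exponential satisfies ‖exp(tA)‖ ≤ c·exp(−α t). In particular exp(tA) → 0 as t → ∞. -/
open Matrix NormedSpace Filter

open scoped Matrix.Norms.L2Operator

/-- `A` is Hurwitz: every complex eigenvalue of `A` has strictly negative real part. -/
def IsHurwitz {N : ℕ} (A : Matrix (Fin N) (Fin N) ℝ) : Prop :=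
  ∀ μ ∈ spectrum ℂ (A.map Complex.ofReal), μ.re < 0

open Nat in
private lemma exp_mulVec_eig {N : ℕ} {M : Matrix (Fin N) (Fin N) ℂ} {μ : ℂ} {w : Fin N → ℂ}
    (hw : M *ᵥ w = μ • w) : exp M *ᵥ w = Complex.exp μ • w := by
  have hpow : ∀ n : ℕ, M ^ n *ᵥ w = μ ^ n • w := by
    intro n
    induction n with
    | zero => simp
    | succ n ih =>
      rw [pow_succ, ← Matrix.mulVec_mulVec, hw, Matrix.mulVec_smul, ih, smul_smul, pow_succ,
        mul_comm]
  let ev : Matrix (Fin N) (Fin N) ℂ →ₗ[ℂ] (Fin N → ℂ) :=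
    { toFun := fun X => X *ᵥ w
      map_add' := fun X Y => Matrix.add_mulVec X Y w
      map_smul' := fun c X => Matrix.smul_mulVec c X w }
  let evc := LinearMap.toContinuousLinearMap ev
  have hev : ∀ X : Matrix (Fin N) (Fin N) ℂ, evc X = X *ᵥ w := fun _ => rfl
  calc exp M *ᵥ w = evc (∑' n : ℕ, (n !⁻¹ : ℂ) • M ^ n) := by rw [hev, exp_eq_tsum ℂ]
    _ = ∑' n : ℕ, (n !⁻¹ : ℂ) • (M ^ n *ᵥ w) := by
        rw [evc.map_tsum (expSeries_summable' M)]
        simp [hev, Matrix.smul_mulVec]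
    _ = ∑' n : ℕ, ((n !⁻¹ : ℂ) * μ ^ n) • w := by
        simp_rw [hpow, smul_smul]
    _ = (∑' n : ℕ, (n !⁻¹ : ℂ) * μ ^ n) • w := by
        rw [Summable.tsum_smul_const]
        simpa using expSeries_summable' (𝕂 := ℂ) μ
    _ = Complex.exp μ • w := by
        rw [Complex.exp_eq_exp_ℂ, exp_eq_tsum ℂ]
        simp [smul_eq_mul]

private lemma spectrum_exp_subset {N : ℕ} (M : Matrix (Fin N) (Fin N) ℂ) :
    spectrum ℂ (exp M) ⊆ Complex.exp '' spectrum ℂ M := by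
  intro lam hlam
  have h1 : Module.End.HasEigenvalue (Matrix.toLinAlgEquiv' (exp M)) lam := by
    rw [Module.End.hasEigenvalue_iff_mem_spectrum, AlgEquiv.spectrum_eq]; exact hlam
  have hcomm : exp M * M = M * exp M := ((Commute.refl M).exp_left).eq
  have hinv : ∀ x ∈ Module.End.eigenspace (Matrix.toLinAlgEquiv' (exp M)) lam,
      Matrix.toLinAlgEquiv' M x ∈ Module.End.eigenspace (Matrix.toLinAlgEquiv' (exp M)) lam := by
    intro x hx
    rw [Module.End.mem_eigenspace_iff] at hx ⊢
    have hx' : exp M *ᵥ x = lam • x := hx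
    show exp M *ᵥ (M *ᵥ x) = lam • (M *ᵥ x)
    rw [Matrix.mulVec_mulVec, hcomm, ← Matrix.mulVec_mulVec, hx', Matrix.mulVec_smul]
  haveI : Nontrivial (Module.End.eigenspace (Matrix.toLinAlgEquiv' (exp M)) lam) :=
    Submodule.nontrivial_iff_ne_bot.mpr h1
  obtain ⟨μ, hμ⟩ :=
    Module.End.exists_eigenvalue (LinearMap.restrict (Matrix.toLinAlgEquiv' M) hinv)
  obtain ⟨w, hw⟩ := hμ.exists_hasEigenvector
  have hw0 : (w : Fin N → ℂ) ≠ 0 := fun h => hw.2 (Subtype.ext h)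
  have hgw : M *ᵥ (w : Fin N → ℂ) = μ • (w : Fin N → ℂ) := congrArg Subtype.val hw.apply_eq_smul
  have hfw : exp M *ᵥ (w : Fin N → ℂ) = lam • (w : Fin N → ℂ) :=
    Module.End.mem_eigenspace_iff.mp w.2
  have hexp := exp_mulVec_eig hgw
  have hlameq : lam = Complex.exp μ := smul_left_injective ℂ hw0 (hfw.symm.trans hexp)
  refine ⟨μ, ?_, hlameq.symm⟩
  rw [← AlgEquiv.spectrum_eq (Matrix.toLinAlgEquiv' (R := ℂ) (n := Fin N)) M,
    ← Module.End.hasEigenvalue_iff_mem_spectrum]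
  exact Module.End.hasEigenvalue_of_hasEigenvector
    ⟨Module.End.mem_eigenspace_iff.mpr hgw, hw0⟩

open scoped ENNReal NNReal in
private lemma geom_bound {N : ℕ} (B : Matrix (Fin N) (Fin N) ℂ) (h : spectralRadius ℂ B < 1) :
    ∃ q : ℝ, 0 < q ∧ q < 1 ∧ ∃ n₀ : ℕ, ∀ n ≥ n₀, ‖B ^ n‖ ≤ q ^ n := by
  obtain ⟨q, hq1, hq2⟩ := ENNReal.lt_iff_exists_nnreal_btwn.mp h
  have hq2' : (q : ℝ) < 1 := by exact_mod_cast hq2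
  have hev : ∀ᶠ n : ℕ in atTop, (‖B ^ n‖₊ : ℝ≥0∞) ^ (1 / (n : ℝ)) < (q : ℝ≥0∞) :=
    (spectrum.pow_nnnorm_pow_one_div_tendsto_nhds_spectralRadius B).eventually_lt_const hq1
  obtain ⟨n₀, hn₀⟩ := eventually_atTop.mp (hev.and (eventually_ge_atTop 1))
  refine ⟨max (q : ℝ) (1/2), lt_max_of_lt_right (by norm_num), max_lt hq2' (by norm_num),
    n₀, fun n hn => ?_⟩
  obtain ⟨h1, h2⟩ := hn₀ n hn
  have hne : (n : ℝ) ≠ 0 := Nat.cast_ne_zero.mpr (by omega)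
  have key : (‖B ^ n‖₊ : ℝ≥0∞) ≤ (q : ℝ≥0∞) ^ (n : ℝ) := by
    calc (‖B ^ n‖₊ : ℝ≥0∞) = ((‖B ^ n‖₊ : ℝ≥0∞) ^ (1 / (n : ℝ))) ^ (n : ℝ) := by
          rw [← ENNReal.rpow_mul, one_div_mul_cancel hne, ENNReal.rpow_one]
      _ ≤ (q : ℝ≥0∞) ^ (n : ℝ) :=
          ENNReal.rpow_le_rpow h1.le (by positivity)
  rw [ENNReal.rpow_natCast, ← ENNReal.coe_pow, ENNReal.coe_le_coe] at key
  have : ‖B ^ n‖ ≤ (q : ℝ) ^ n := by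
    have := NNReal.coe_le_coe.mpr key
    simpa [coe_nnnorm] using this
  exact this.trans (pow_le_pow_left₀ q.coe_nonneg (le_max_left _ _) n)

private noncomputable def ofRealL {N : ℕ} :
    Matrix (Fin N) (Fin N) ℝ →ₗ[ℝ] Matrix (Fin N) (Fin N) ℂ where
  toFun X := X.map Complex.ofReal
  map_add' X Y := by ext i j; simp
  map_smul' c X := by ext i j; simp

private noncomputable def reL {N : ℕ} :
    Matrix (Fin N) (Fin N) ℂ →ₗ[ℝ] Matrix (Fin N) (Fin N) ℝ where
  toFun X := X.map Complex.re
  map_add' X Y := by ext i j; simp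
  map_smul' c X := by ext i j; simp [Complex.smul_re]

private lemma map_exp_ofReal {N : ℕ} (B : Matrix (Fin N) (Fin N) ℝ) :
    (exp B).map Complex.ofReal = exp (B.map Complex.ofReal) := by
  have hcont : Continuous (Complex.ofRealHom.mapMatrix :
      Matrix (Fin N) (Fin N) ℝ →+* Matrix (Fin N) (Fin N) ℂ) := by
    have : Continuous (ofRealL (N := N)) := ofRealL.continuous_of_finiteDimensional
    exact this
  letI : NormedAlgebra ℚ (Matrix (Fin N) (Fin N) ℝ) := NormedAlgebra.restrictScalars ℚ ℝ _
  have h := map_exp (Complex.ofRealHom.mapMatrix :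
      Matrix (Fin N) (Fin N) ℝ →+* Matrix (Fin N) (Fin N) ℂ) hcont B
  have h2 : (exp (B.map Complex.ofReal) : Matrix (Fin N) (Fin N) ℂ)
      = exp (B.map Complex.ofReal) := by
    rfl
  calc (exp B).map Complex.ofReal = exp (B.map Complex.ofReal) := h
    _ = exp (B.map Complex.ofReal) := h2

private lemma norm_le_comp {N : ℕ} (B : Matrix (Fin N) (Fin N) ℝ) :
    ‖B‖ ≤ (‖LinearMap.toContinuousLinearMap (reL (N := N))‖ + 1) * ‖B.map Complex.ofReal‖ := by
  have h1 : B = LinearMap.toContinuousLinearMap (reL (N := N)) (B.map Complex.ofReal) := by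
    ext i j
    simp [reL, LinearMap.coe_toContinuousLinearMap', Matrix.map]
  calc ‖B‖ = ‖LinearMap.toContinuousLinearMap (reL (N := N)) (B.map Complex.ofReal)‖ := by
        rw [← h1]
    _ ≤ ‖LinearMap.toContinuousLinearMap (reL (N := N))‖ * ‖B.map Complex.ofReal‖ :=
        ContinuousLinearMap.le_opNorm _ _
    _ ≤ (‖LinearMap.toContinuousLinearMap (reL (N := N))‖ + 1) * ‖B.map Complex.ofReal‖ := by
        apply mul_le_mul_of_nonneg_right (by linarith) (norm_nonneg _)

/-- If `A` is Hurwitz, then `‖exp (t A)‖ ≤ c ⬝ exp (-α t)` for some `c, α > 0`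
(operator norm), and in particular `exp (t A) → 0` as `t → ∞`. -/
theorem exp_decay_of_hurwitz {N : ℕ} (A : Matrix (Fin N) (Fin N) ℝ)
    (hA : IsHurwitz A) :
    (∃ c > (0 : ℝ), ∃ α > (0 : ℝ), ∀ t : ℝ, 0 ≤ t →
        ‖exp (t • A)‖ ≤ c * Real.exp (-α * t)) ∧
      Tendsto (fun t : ℝ => exp (t • A)) atTop (nhds 0) := by
  rcases Nat.eq_zero_or_pos N with hN | hN
  · subst hN
    have hz : ∀ t : ℝ, exp (t • A) = 0 := fun t => Subsingleton.elim _ _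
    refine ⟨⟨1, one_pos, 1, one_pos, fun t _ => ?_⟩, ?_⟩
    · rw [hz t, norm_zero]
      positivity
    · simp only [hz]
      exact tendsto_const_nhds
  haveI : Nonempty (Fin N) := Fin.pos_iff_nonempty.mp hN
  letI : NormedAlgebra ℚ (Matrix (Fin N) (Fin N) ℝ) := NormedAlgebra.restrictScalars ℚ ℝ _
  set M := A.map Complex.ofReal with hM
  -- spectral radius of exp M is < 1
  have hρ : spectralRadius ℂ (exp M) < 1 := by
    have := spectrum.spectralRadius_lt_of_forall_lt_of_nonempty
      (a := exp M) (spectrum.nonempty _) (r := 1) ?_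
    · simpa using this
    · intro k hk
      obtain ⟨μ, hμ, rfl⟩ := spectrum_exp_subset M hk
      have : ‖Complex.exp μ‖ < 1 := by
        rw [Complex.norm_exp]
        exact Real.exp_lt_one_iff.mpr (hA μ hμ)
      exact_mod_cast this
  obtain ⟨q, hq0, hq1, n₀, hq⟩ := geom_bound (exp M) hρ
  set m₀ : ℕ := n₀ + 1 with hm₀
  -- continuity and compact bound
  have hc : Continuous fun t : ℝ => exp (t • A) :=
    exp_continuous.comp (continuous_id.smul continuous_const)
  obtain ⟨C₁, hC₁⟩ := (isCompact_Icc (a := (0:ℝ)) (b := (m₀ : ℝ))).exists_bound_of_continuousOn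
    hc.continuousOn
  set C₀ : ℝ := max C₁ 1 with hC₀
  have hC₀1 : (1:ℝ) ≤ C₀ := le_max_right _ _
  have hC₀0 : (0:ℝ) < C₀ := lt_of_lt_of_le one_pos hC₀1
  have hCb : ∀ t ∈ Set.Icc (0:ℝ) (m₀:ℝ), ‖exp (t • A)‖ ≤ C₀ :=
    fun t ht => (hC₁ t ht).trans (le_max_left _ _)
  set c1 : ℝ := ‖LinearMap.toContinuousLinearMap (reL (N := N))‖ + 1 with hc1
  have hc10 : (0:ℝ) < c1 := by positivity
  set α : ℝ := -Real.log q with hα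
  have hα0 : (0:ℝ) < α := neg_pos.mpr (Real.log_neg hq0 hq1)
  set c : ℝ := max (C₀ * Real.exp (α * m₀)) (C₀ * c1 * Real.exp α) with hc'
  have hcpos : (0:ℝ) < c := lt_max_of_lt_left (by positivity)
  have hbound : ∀ t : ℝ, 0 ≤ t → ‖exp (t • A)‖ ≤ c * Real.exp (-α * t) := by
    intro t ht
    by_cases htm : t ≤ (m₀ : ℝ)
    · calc ‖exp (t • A)‖ ≤ C₀ := hCb t ⟨ht, htm⟩
        _ = C₀ * Real.exp (α * t) * Real.exp (-α * t) := by
            rw [mul_assoc, ← Real.exp_add]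
            ring_nf
            simp
        _ ≤ C₀ * Real.exp (α * m₀) * Real.exp (-α * t) := by
            gcongr
        _ ≤ c * Real.exp (-α * t) :=
            mul_le_mul_of_nonneg_right (le_max_left _ _) (Real.exp_nonneg _)
    · push_neg at htm
      set n : ℕ := ⌊t⌋₊ with hn
      have hnt : (n : ℝ) ≤ t := Nat.floor_le ht
      have hnt2 : t < (n : ℝ) + 1 := Nat.lt_floor_add_one t
      have hmn : m₀ ≤ n := Nat.le_floor htm.le
      have hn₀n : n₀ ≤ n := le_trans (Nat.le_succ n₀) hmn
      set s : ℝ := t - n with hs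
      have hs0 : 0 ≤ s := by simp [hs]; linarith
      have hsm : s ≤ (m₀ : ℝ) := by
        have h1 : s < 1 := by simp [hs]; linarith
        have : (1:ℝ) ≤ (m₀:ℝ) := by exact_mod_cast Nat.one_le_iff_ne_zero.mpr (by omega)
        linarith
      have hdecomp : exp (t • A) = exp (s • A) * exp A ^ n := by
        have h1 : t • A = s • A + (n : ℝ) • A := by
          rw [← add_smul]
          congr 1
          simp [hs]
        rw [h1, NormedSpace.exp_add_of_commute (((Commute.refl A).smul_left s).smul_right ((n:ℕ):ℝ)),
          Nat.cast_smul_eq_nsmul ℝ n A, NormedSpace.exp_nsmul]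
      have hmap : (exp A ^ n).map Complex.ofReal = (exp M) ^ n := by
        have h2 : (exp A ^ n).map Complex.ofReal
            = ((exp A).map Complex.ofReal) ^ n :=
          map_pow (Complex.ofRealHom.mapMatrix :
            Matrix (Fin N) (Fin N) ℝ →+* Matrix (Fin N) (Fin N) ℂ) (exp A) n
        rw [h2, map_exp_ofReal, hM]
      have hpow : ‖exp A ^ n‖ ≤ c1 * (q ^ n) := by
        calc ‖exp A ^ n‖ ≤ c1 * ‖(exp A ^ n).map Complex.ofReal‖ := norm_le_comp _
          _ = c1 * ‖(exp M) ^ n‖ := by rw [hmap]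
          _ ≤ c1 * q ^ n := mul_le_mul_of_nonneg_left (hq n hn₀n) hc10.le
      have hqn : q ^ n ≤ Real.exp α * Real.exp (-α * t) := by
        have hqe : q ^ n = Real.exp ((n : ℝ) * Real.log q) := by
          rw [← Real.exp_log hq0, ← Real.exp_nat_mul, Real.exp_log hq0]
        have hle : (n : ℝ) * Real.log q ≤ (t - 1) * Real.log q := by
          apply mul_le_mul_of_nonpos_right _ (Real.log_nonpos hq0.le hq1.le)
          linarith
        calc q ^ n = Real.exp ((n : ℝ) * Real.log q) := hqe
          _ ≤ Real.exp ((t - 1) * Real.log q) := Real.exp_le_exp.mpr hle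
          _ = Real.exp α * Real.exp (-α * t) := by
              rw [← Real.exp_add]
              congr 1
              simp [hα]
              ring
      calc ‖exp (t • A)‖ = ‖exp (s • A) * exp A ^ n‖ := by rw [hdecomp]
        _ ≤ ‖exp (s • A)‖ * ‖exp A ^ n‖ := norm_mul_le _ _
        _ ≤ C₀ * (c1 * q ^ n) :=
            mul_le_mul (hCb s ⟨hs0, hsm⟩) hpow (norm_nonneg _) hC₀0.le
        _ ≤ C₀ * (c1 * (Real.exp α * Real.exp (-α * t))) := by
            apply mul_le_mul_of_nonneg_left (mul_le_mul_of_nonneg_left hqn hc10.le) hC₀0.le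
        _ = (C₀ * c1 * Real.exp α) * Real.exp (-α * t) := by ring
        _ ≤ c * Real.exp (-α * t) :=
            mul_le_mul_of_nonneg_right (le_max_right _ _) (Real.exp_nonneg _)
  refine ⟨⟨c, hcpos, α, hα0, hbound⟩, ?_⟩
  have hg : Tendsto (fun t : ℝ => c * Real.exp (-α * t)) atTop (nhds 0) := by
    have h1 : Tendsto (fun t : ℝ => α * t) atTop atTop :=
      Tendsto.const_mul_atTop hα0 tendsto_id
    have h2 : Tendsto (fun t : ℝ => Real.exp (-(α * t))) atTop (nhds 0) :=
      Real.tendsto_exp_neg_atTop_nhds_zero.comp h1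
    have h3 := h2.const_mul c
    simpa [neg_mul] using h3
  apply squeeze_zero_norm' _ hg
  filter_upwards [eventually_ge_atTop (0:ℝ)] with t ht using hbound t ht
end

section
/- Let A ∈ ℝ^{N×N} be Hurwitz, B ∈ ℝ^{N×M} and C ∈ ℝ^{M×N}, and let W_X = ∫₀^∞ exp(tA) B C exp(tA) dt be the cross Gramian. Then W_X solves the Sylvester matrix equation A·W_X + W_X·A = −B·C. -/
open MeasureTheory Matrix NormedSpace

attribute [local instance] Matrix.normedAddCommGroup Matrix.normedSpace

namespace CrossGramianProof
open Filter

section Shielded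
attribute [-instance] Matrix.normedAddCommGroup Matrix.normedSpace

lemma pow_div_factorial_le_exp' {x : ℝ} (hx : 0 ≤ x) (k : ℕ) :
    x ^ k / (Nat.factorial k : ℝ) ≤ Real.exp x :=
  le_trans
    (Finset.single_le_sum (f := fun i => x ^ i / (Nat.factorial i : ℝ)) (fun i _ => by positivity)
      (Finset.self_mem_range_succ k))
    (Real.sum_le_exp_of_nonneg hx _)

variable {n : ℕ}

noncomputable def mulVecCLM (v : Fin n → ℂ)
    [SeminormedAddCommGroup (Matrix (Fin n) (Fin n) ℂ)]
    [NormedSpace ℂ (Matrix (Fin n) (Fin n) ℂ)] :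
    Matrix (Fin n) (Fin n) ℂ →L[ℂ] (Fin n → ℂ) :=
  LinearMap.toContinuousLinearMap
    { toFun := fun M => M *ᵥ v
      map_add' := fun X Y => Matrix.add_mulVec X Y v
      map_smul' := fun c X => Matrix.smul_mulVec c X v }

lemma vector_decay (A : Matrix (Fin n) (Fin n) ℂ) {ε : ℝ} (hε : 0 < ε)
    (hspec : ∀ μ ∈ spectrum ℂ A, μ.re ≤ -(2 * ε)) (v : Fin n → ℂ) :
    ∃ c : ℝ, 0 ≤ c ∧ ∀ t : ℝ, 0 ≤ t →
      ‖exp ((t : ℂ) • A) *ᵥ v‖ ≤ c * Real.exp (-ε * t) := by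
  letI : NormedRing (Matrix (Fin n) (Fin n) ℂ) := Matrix.linftyOpNormedRing
  letI : NormedAlgebra ℂ (Matrix (Fin n) (Fin n) ℂ) := Matrix.linftyOpNormedAlgebra
  set f : Module.End ℂ (Fin n → ℂ) := Matrix.toLinAlgEquiv' A with hf
  have htop : v ∈ ⨆ μ, f.maxGenEigenspace μ := by
    rw [Module.End.iSup_maxGenEigenspace_eq_top]; trivial
  refine Submodule.iSup_induction (motive := fun v => ∃ c : ℝ, 0 ≤ c ∧ ∀ t : ℝ, 0 ≤ t →
      ‖exp ((t : ℂ) • A) *ᵥ v‖ ≤ c * Real.exp (-ε * t)) _ htop ?_ ?_ ?_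
  · -- main case
    rintro μ v hv
    obtain ⟨k, hk⟩ := (Module.End.mem_maxGenEigenspace f μ v).mp hv
    by_cases hv0 : v = 0
    · exact ⟨0, le_rfl, fun t _ => by simp [hv0]⟩
    set Nμ : Matrix (Fin n) (Fin n) ℂ := A - μ • 1 with hNμ
    have hNv : Nμ ^ k *ᵥ v = 0 := by
      have h1 : (Matrix.toLinAlgEquiv' (Nμ ^ k)) v = 0 := by
        rw [map_pow, map_sub, _root_.map_smul, _root_.map_one]; exact hk
      rw [← Matrix.mulVecLin_apply]
      rwa [Matrix.toLinAlgEquiv'_apply] at h1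
    have hμspec : μ ∈ spectrum ℂ A := by
      rw [← AlgEquiv.spectrum_eq (Matrix.toLinAlgEquiv' (R := ℂ) (n := Fin n)) A]
      rw [← Module.End.hasEigenvalue_iff_mem_spectrum]
      have hne : f.maxGenEigenspace μ ≠ ⊥ := by
        intro hbot
        exact hv0 (by simpa [hbot] using hv)
      rw [Module.End.maxGenEigenspace_eq] at hne
      exact Module.End.hasEigenvalue_of_hasGenEigenvalue (k := f.maxGenEigenspaceIndex μ) hne
    have hre : μ.re ≤ -(2 * ε) := hspec μ hμspec
    have hsplit : ∀ t : ℝ, exp ((t:ℂ) • A) = Complex.exp ((t:ℂ) * μ) • exp ((t:ℂ) • Nμ) := by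
      intro t
      have hcomm : Commute ((t:ℂ) • (μ • (1 : Matrix (Fin n) (Fin n) ℂ))) ((t:ℂ) • Nμ) :=
        (((Commute.one_left Nμ).smul_left μ).smul_left (t:ℂ)).smul_right (t:ℂ)
      have h1 : (t:ℂ) • A = (t:ℂ) • (μ • (1 : Matrix (Fin n) (Fin n) ℂ)) + (t:ℂ) • Nμ := by
        rw [← smul_add, add_sub_cancel]
      rw [h1, exp_add_of_commute _ _ hcomm]
      have h2 : (t:ℂ) • μ • (1 : Matrix (Fin n) (Fin n) ℂ)
          = algebraMap ℂ (Matrix (Fin n) (Fin n) ℂ) ((t:ℂ) * μ) := by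
        rw [smul_smul, Algebra.algebraMap_eq_smul_one]
      rw [h2]; erw [← algebraMap_exp_comm]; rw [← Complex.exp_eq_exp_ℂ, Algebra.algebraMap_eq_smul_one,
        smul_mul_assoc, one_mul]
    have hexp : ∀ t : ℝ, exp ((t:ℂ) • Nμ) *ᵥ v
        = ∑ m ∈ Finset.range k, ((t:ℂ) ^ m * ((Nat.factorial m : ℂ))⁻¹) • (Nμ ^ m *ᵥ v) := by
      intro t
      have hsum : Summable fun m : ℕ => ((Nat.factorial m : ℂ))⁻¹ • ((t:ℂ) • Nμ) ^ m :=
        expSeries_summable' ((t:ℂ) • Nμ)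
      have h0 : exp ((t:ℂ) • Nμ) *ᵥ v
          = ∑' m : ℕ, ((Nat.factorial m : ℂ))⁻¹ • (((t:ℂ) • Nμ) ^ m *ᵥ v) := by
        rw [exp_eq_tsum ℂ]
        have h := (mulVecCLM v).map_tsum hsum
        simpa [Matrix.smul_mulVec, mulVecCLM] using h
      rw [h0]
      rw [tsum_eq_sum (s := Finset.range k) ?_]
      · refine Finset.sum_congr rfl fun m _ => ?_
        rw [smul_pow, Matrix.smul_mulVec, smul_smul, mul_comm]
      · intro m hm
        have hk' : k ≤ m := by simpa using hm
        have hz : Nμ ^ m *ᵥ v = 0 := by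
          rw [← Nat.sub_add_cancel hk', pow_add, ← Matrix.mulVec_mulVec, hNv, Matrix.mulVec_zero]
        rw [smul_pow, Matrix.smul_mulVec, hz, smul_zero, smul_zero]
    set d : ℕ → ℝ := fun m => ‖Nμ ^ m *ᵥ v‖ with hd
    refine ⟨∑ m ∈ Finset.range k, ε⁻¹ ^ m * d m,
      Finset.sum_nonneg fun m _ => by positivity, fun t ht => ?_⟩
    rw [hsplit t, Matrix.smul_mulVec, norm_smul, hexp t]
    have hnexp : ‖Complex.exp ((t:ℂ) * μ)‖ = Real.exp (t * μ.re) := by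
      rw [Complex.norm_exp]
      congr 1
      simp [Complex.mul_re]
    rw [hnexp]
    calc Real.exp (t * μ.re)
            * ‖∑ m ∈ Finset.range k, ((t:ℂ)^m * ((Nat.factorial m : ℂ))⁻¹) • (Nμ^m *ᵥ v)‖
        ≤ Real.exp (t * μ.re)
            * ∑ m ∈ Finset.range k, (t ^ m / (Nat.factorial m : ℝ)) * d m := by
          refine mul_le_mul_of_nonneg_left ((norm_sum_le _ _).trans ?_) (Real.exp_pos _).le
          refine Finset.sum_le_sum fun m _ => ?_
          rw [norm_smul]
          refine le_of_eq ?_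
          rw [norm_mul, norm_pow, norm_inv, Complex.norm_real, Real.norm_eq_abs,
            abs_of_nonneg ht, Complex.norm_natCast, div_eq_mul_inv]
      _ ≤ ∑ m ∈ Finset.range k, (ε⁻¹ ^ m * d m) * Real.exp (-ε * t) := by
          rw [Finset.mul_sum]
          refine Finset.sum_le_sum fun m _ => ?_
          have h1 : t ^ m / (Nat.factorial m : ℝ) ≤ ε⁻¹ ^ m * Real.exp (ε * t) := by
            have h3 := pow_div_factorial_le_exp' (mul_nonneg hε.le ht) m
            have h2 : t ^ m / (Nat.factorial m : ℝ)
                = ε⁻¹ ^ m * ((ε*t) ^ m / (Nat.factorial m : ℝ)) := by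
              rw [mul_pow]
              field_simp
              rw [mul_assoc, ← mul_pow, one_div, inv_mul_cancel₀ hε.ne', one_pow, mul_one]
            rw [h2]
            exact mul_le_mul_of_nonneg_left h3 (by positivity)
          have h2 : Real.exp (t * μ.re) ≤ Real.exp (-(2*ε) * t) :=
            Real.exp_le_exp.mpr (by nlinarith)
          have hd0 : 0 ≤ d m := norm_nonneg _
          calc Real.exp (t * μ.re) * ((t ^ m / (Nat.factorial m : ℝ)) * d m)
              ≤ Real.exp (-(2*ε)*t) * ((ε⁻¹ ^ m * Real.exp (ε*t)) * d m) := by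
                refine mul_le_mul h2 (mul_le_mul_of_nonneg_right h1 hd0) (by positivity)
                  (Real.exp_pos _).le
            _ = (ε⁻¹ ^ m * d m) * (Real.exp (-(2*ε)*t) * Real.exp (ε*t)) := by ring
            _ = (ε⁻¹ ^ m * d m) * Real.exp (-ε * t) := by
                rw [← Real.exp_add]
                congr 1
                ring
      _ = (∑ m ∈ Finset.range k, ε⁻¹ ^ m * d m) * Real.exp (-ε * t) := by
          rw [Finset.sum_mul]
  · exact ⟨0, le_rfl, fun t _ => by simp⟩
  · rintro x y ⟨c₁, hc₁, h₁⟩ ⟨c₂, hc₂, h₂⟩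
    refine ⟨c₁ + c₂, by linarith, fun t ht => ?_⟩
    rw [Matrix.mulVec_add, add_mul]
    exact (norm_add_le _ _).trans (add_le_add (h₁ t ht) (h₂ t ht))

lemma decay_entries (A : Matrix (Fin n) (Fin n) ℂ)
    (hA : ∀ μ ∈ spectrum ℂ A, μ.re < 0) :
    ∃ ε c : ℝ, 0 < ε ∧ 0 ≤ c ∧ ∀ t : ℝ, 0 ≤ t → ∀ i j,
      ‖exp ((t : ℂ) • A) i j‖ ≤ c * Real.exp (-ε * t) := by
  obtain ⟨ε, hε, hspec⟩ : ∃ ε : ℝ, 0 < ε ∧ ∀ μ ∈ spectrum ℂ A, μ.re ≤ -(2 * ε) := by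
    rcases Set.eq_empty_or_nonempty (spectrum ℂ A) with h | h
    · exact ⟨1, one_pos, fun μ hμ => by rw [h] at hμ; exact hμ.elim⟩
    · obtain ⟨μ₀, hμ₀, hmax⟩ := Set.Finite.exists_maximalFor Complex.re _ (Set.toFinite _) h
      refine ⟨-μ₀.re / 2, by linarith [hA μ₀ hμ₀], fun μ hμ => ?_⟩
      rcases le_or_gt μ.re μ₀.re with h' | h'
      · linarith
      · exact absurd (hmax hμ h'.le) (not_le.mpr h')
  choose cf hc0 hcb using fun j : Fin n => vector_decay A hε hspec (Pi.single j 1)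
  refine ⟨ε, ∑ j, cf j, hε, Finset.sum_nonneg fun j _ => hc0 j, fun t ht i j => ?_⟩
  have hv : exp ((t:ℂ) • A) *ᵥ Pi.single j 1 = fun i' => exp ((t:ℂ) • A) i' j := by
    ext i'
    simp [Matrix.mulVec_single]
  have h1 : ‖exp ((t:ℂ) • A) i j‖ ≤ cf j * Real.exp (-ε*t) := by
    refine le_trans ?_ (hcb j t ht)
    calc ‖exp ((t:ℂ)•A) i j‖ = ‖(exp ((t:ℂ)•A) *ᵥ Pi.single j 1) i‖ := by rw [hv]
      _ ≤ ‖exp ((t:ℂ)•A) *ᵥ Pi.single j 1‖ := norm_le_pi_norm _ i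
  refine h1.trans (mul_le_mul_of_nonneg_right
    (Finset.single_le_sum (fun j _ => hc0 j) (Finset.mem_univ j)) (Real.exp_pos _).le)

section helpers
variable {N : ℕ}

lemma linfty_norm_le_sum (M : Matrix (Fin N) (Fin N) ℝ) :
    @norm _ Matrix.linftyOpSeminormedAddCommGroup.toNorm M ≤ ∑ i, ∑ j, |M i j| := by
  letI := Matrix.linftyOpSeminormedAddCommGroup (m := Fin N) (n := Fin N) (α := ℝ)
  rw [Matrix.linfty_opNorm_def]
  have h : (Finset.univ.sup fun i : Fin N => ∑ j, ‖M i j‖₊) ≤ ∑ i, ∑ j, ‖M i j‖₊ :=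
    Finset.sup_le fun i _ =>
      Finset.single_le_sum (f := fun i => ∑ j, ‖M i j‖₊) (fun _ _ => zero_le)
        (Finset.mem_univ i)
  calc ((Finset.univ.sup fun i : Fin N => ∑ j, ‖M i j‖₊ : NNReal) : ℝ)
      ≤ ((∑ i, ∑ j, ‖M i j‖₊ : NNReal) : ℝ) := by exact_mod_cast h
    _ = ∑ i, ∑ j, |M i j| := by
        push_cast
        simp [Real.norm_eq_abs]

lemma entry_le_linfty_norm (M : Matrix (Fin N) (Fin N) ℝ) (i j : Fin N) :
    |M i j| ≤ @norm _ Matrix.linftyOpSeminormedAddCommGroup.toNorm M := by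
  letI := Matrix.linftyOpSeminormedAddCommGroup (m := Fin N) (n := Fin N) (α := ℝ)
  rw [Matrix.linfty_opNorm_def]
  have h : ‖M i j‖₊ ≤ Finset.univ.sup fun i : Fin N => ∑ j, ‖M i j‖₊ :=
    le_trans (Finset.single_le_sum (f := fun j => ‖M i j‖₊) (fun _ _ => zero_le)
      (Finset.mem_univ j)) (Finset.le_sup (f := fun i : Fin N => ∑ j, ‖M i j‖₊) (Finset.mem_univ i))
  calc |M i j| = ((‖M i j‖₊ : NNReal) : ℝ) := by simp [Real.norm_eq_abs]
    _ ≤ _ := by exact_mod_cast h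

end helpers

variable {N : ℕ}

lemma real_decay_entries (A : Matrix (Fin N) (Fin N) ℝ)
    (hA : ∀ μ ∈ spectrum ℂ (A.map Complex.ofReal), μ.re < 0) :
    ∃ ε c : ℝ, 0 < ε ∧ 0 ≤ c ∧ ∀ t : ℝ, 0 ≤ t → ∀ i j,
      |exp (t • A) i j| ≤ c * Real.exp (-ε * t) := by
  obtain ⟨ε, c, hε, hc, hb⟩ := decay_entries (A.map Complex.ofReal) hA
  refine ⟨ε, c, hε, hc, fun t ht i j => ?_⟩
  have hmap : (exp (t • A)).map Complex.ofReal
      = exp ((t:ℂ) • A.map Complex.ofReal) := by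
    letI : NormedRing (Matrix (Fin N) (Fin N) ℝ) := Matrix.linftyOpNormedRing
    letI : NormedAlgebra ℝ (Matrix (Fin N) (Fin N) ℝ) := Matrix.linftyOpNormedAlgebra
    letI : NormedAlgebra ℚ (Matrix (Fin N) (Fin N) ℝ) := Matrix.linftyOpNormedAlgebra
    letI : NormedRing (Matrix (Fin N) (Fin N) ℂ) := Matrix.linftyOpNormedRing
    letI : NormedAlgebra ℝ (Matrix (Fin N) (Fin N) ℂ) := Matrix.linftyOpNormedAlgebra
    letI : NormedAlgebra ℂ (Matrix (Fin N) (Fin N) ℂ) := Matrix.linftyOpNormedAlgebra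
    have hcont : Continuous
        ((Complex.ofRealHom.mapMatrix :
          Matrix (Fin N) (Fin N) ℝ →+* Matrix (Fin N) (Fin N) ℂ)) := by
      show Continuous fun M : Matrix (Fin N) (Fin N) ℝ => M.map Complex.ofReal
      exact Continuous.matrix_map continuous_id Complex.continuous_ofReal
    have h1 := map_exp
      (Complex.ofRealHom.mapMatrix : Matrix (Fin N) (Fin N) ℝ →+* Matrix (Fin N) (Fin N) ℂ)
      hcont (t • A)
    have h2 : (Complex.ofRealHom.mapMatrix :
        Matrix (Fin N) (Fin N) ℝ →+* Matrix (Fin N) (Fin N) ℂ) (t • A)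
        = (t:ℂ) • A.map Complex.ofReal := by
      ext i j
      simp [RingHom.mapMatrix_apply, Matrix.map_apply]
    have h3 : (exp (t • A)).map Complex.ofReal
        = exp ((t:ℂ) • A.map Complex.ofReal) := by
      rw [← h2]
      exact h1
    rw [h3]
  have h4 : ((exp (t • A) i j : ℝ) : ℂ) = exp ((t:ℂ) • A.map Complex.ofReal) i j := by
    rw [← hmap]
    rfl
  calc |exp (t • A) i j| = ‖((exp (t • A) i j : ℝ) : ℂ)‖ := by
        rw [Complex.norm_real, Real.norm_eq_abs]
    _ = ‖exp ((t:ℂ) • A.map Complex.ofReal) i j‖ := by rw [h4]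
    _ ≤ c * Real.exp (-ε * t) := hb t ht i j

lemma core {N M : ℕ} (A : Matrix (Fin N) (Fin N) ℝ) (B : Matrix (Fin N) (Fin M) ℝ)
    (C : Matrix (Fin M) (Fin N) ℝ)
    (hA : ∀ μ ∈ spectrum ℂ (A.map Complex.ofReal), μ.re < 0) :
    (∀ i j : Fin N, Continuous fun t : ℝ => (exp (t • A) * B * C * exp (t • A)) i j) ∧
    (∃ ε c : ℝ, 0 < ε ∧ 0 ≤ c ∧ ∀ t : ℝ, 0 ≤ t → ∀ i j : Fin N,
        |(exp (t • A) * B * C * exp (t • A)) i j| ≤ c * Real.exp (-ε * t)) ∧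
    (∀ i j : Fin N, (∫ t in Set.Ioi (0:ℝ),
        (A * (exp (t • A) * B * C * exp (t • A))
          + (exp (t • A) * B * C * exp (t • A)) * A) i j) = (-(B * C)) i j) := by
  set X : ℝ → Matrix (Fin N) (Fin N) ℝ :=
    fun t => exp (t • A) * B * C * exp (t • A) with hXdef
  set F : ℝ → Matrix (Fin N) (Fin N) ℝ :=
    fun t => exp (t • A) * (B * C) * exp (t • A) with hFdef
  set G : ℝ → Matrix (Fin N) (Fin N) ℝ := fun t => A * F t + F t * A with hGdef
  have hXF : ∀ t, X t = F t := fun t => by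
    simp only [hXdef, hFdef, Matrix.mul_assoc]
  letI : NormedRing (Matrix (Fin N) (Fin N) ℝ) := Matrix.linftyOpNormedRing
  letI : NormedAlgebra ℝ (Matrix (Fin N) (Fin N) ℝ) := Matrix.linftyOpNormedAlgebra
  letI : NormedAlgebra ℚ (Matrix (Fin N) (Fin N) ℝ) := Matrix.linftyOpNormedAlgebra
  obtain ⟨ε, c, hε, hc, hub⟩ := real_decay_entries A hA
  have hu_cont : Continuous fun t : ℝ => exp (t • A) :=
    exp_continuous.comp (continuous_id.smul continuous_const)
  have hF_cont : Continuous F := (hu_cont.mul continuous_const).mul hu_cont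
  have hG_cont : Continuous G := (continuous_const.mul hF_cont).add (hF_cont.mul continuous_const)
  -- norm bound on exp
  have hu_norm : ∀ t : ℝ, 0 ≤ t → ‖exp (t • A)‖ ≤ ((N:ℝ)^2*c) * Real.exp (-ε * t) := by
    intro t ht
    refine (linfty_norm_le_sum (exp (t • A))).trans ?_
    calc ∑ i, ∑ j, |exp (t • A) i j|
        ≤ ∑ _i : Fin N, ∑ _j : Fin N, c * Real.exp (-ε*t) :=
          Finset.sum_le_sum fun i _ => Finset.sum_le_sum fun j _ => hub t ht i j
      _ = ((N:ℝ)^2*c) * Real.exp (-ε*t) := by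
          simp [Finset.sum_const]
          ring
  set cu : ℝ := (N:ℝ)^2*c with hcu
  have hcu0 : 0 ≤ cu := by positivity
  set c₁ : ℝ := cu * ‖B * C‖ * cu with hc₁
  have hc₁0 : 0 ≤ c₁ := by positivity
  have hF_norm : ∀ t : ℝ, 0 ≤ t → ‖F t‖ ≤ c₁ * Real.exp (-(2*ε) * t) := by
    intro t ht
    have h1 : ‖F t‖ ≤ ‖exp (t • A)‖ * ‖(B * C : Matrix (Fin N) (Fin N) ℝ)‖ * ‖exp (t • A)‖ :=
      le_trans (norm_mul_le _ _)
        (mul_le_mul_of_nonneg_right (norm_mul_le _ _) (norm_nonneg _))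
    refine h1.trans ?_
    calc ‖exp (t • A)‖ * ‖(B * C : Matrix (Fin N) (Fin N) ℝ)‖ * ‖exp (t • A)‖
        ≤ (cu * Real.exp (-ε*t)) * ‖(B * C : Matrix (Fin N) (Fin N) ℝ)‖
            * (cu * Real.exp (-ε*t)) := by
          have := hu_norm t ht
          gcongr
      _ = c₁ * (Real.exp (-ε*t) * Real.exp (-ε*t)) := by rw [hc₁]; ring
      _ = c₁ * Real.exp (-(2*ε) * t) := by
          rw [← Real.exp_add]
          congr 1
          ring
  set c₂ : ℝ := 2 * ‖A‖ * c₁ with hc₂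
  have hc₂0 : 0 ≤ c₂ := by positivity
  have hG_norm : ∀ t : ℝ, 0 ≤ t → ‖G t‖ ≤ c₂ * Real.exp (-(2*ε) * t) := by
    intro t ht
    have h1 : ‖G t‖ ≤ ‖A‖ * ‖F t‖ + ‖F t‖ * ‖A‖ :=
      (norm_add_le _ _).trans (add_le_add (norm_mul_le _ _) (norm_mul_le _ _))
    refine h1.trans ?_
    have h2 := hF_norm t ht
    have hFn : 0 ≤ ‖F t‖ := norm_nonneg _
    have hAn : 0 ≤ ‖A‖ := norm_nonneg _
    calc ‖A‖ * ‖F t‖ + ‖F t‖ * ‖A‖ = 2 * ‖A‖ * ‖F t‖ := by ring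
      _ ≤ 2 * ‖A‖ * (c₁ * Real.exp (-(2*ε)*t)) := by gcongr
      _ = c₂ * Real.exp (-(2*ε)*t) := by rw [hc₂]; ring
  -- derivative
  have hF_deriv : ∀ t : ℝ, HasDerivAt F (G t) t := by
    intro t
    have h := ((hasDerivAt_exp_smul_const' A t).mul
      (hasDerivAt_const t (B * C : Matrix (Fin N) (Fin N) ℝ))).mul
      (hasDerivAt_exp_smul_const A t)
    have h2 : G t = (A * exp (t • A) * (B * C) + exp (t • A) * 0) * exp (t • A)
        + exp (t • A) * (B * C) * (exp (t • A) * A) := by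
      simp only [hGdef, hFdef, mul_zero, add_zero, Matrix.mul_assoc]
    rw [h2]
    exact h
  -- integrability of G
  have h2ε : (0:ℝ) < 2 * ε := by linarith
  letI : TopologicalSpace (Matrix (Fin N) (Fin N) ℝ) :=
    SeminormedAddGroup.toPseudoMetricSpace.toUniformSpace.toTopologicalSpace
  have hG_int : IntegrableOn G (Set.Ioi (0:ℝ)) := by
    refine Integrable.mono' ((exp_neg_integrableOn_Ioi 0 h2ε).const_mul c₂)
      (show Continuous G from hG_cont).aestronglyMeasurable.restrict ?_
    filter_upwards [ae_restrict_mem measurableSet_Ioi] with t ht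
    exact hG_norm t (le_of_lt ht)
  -- limit of F at infinity
  have hF_tend : Tendsto F atTop (nhds 0) := by
    have h1 : Tendsto (fun t : ℝ => 2 * ε * t) atTop atTop :=
      Tendsto.const_mul_atTop h2ε tendsto_id
    have h2 : Tendsto (fun t : ℝ => Real.exp (-(2*ε) * t)) atTop (nhds 0) := by
      have h3 := Real.tendsto_exp_neg_atTop_nhds_zero.comp h1
      refine h3.congr fun t => ?_
      simp only [Function.comp_apply]
      ring_nf
    have h4 : Tendsto (fun t : ℝ => c₁ * Real.exp (-(2*ε) * t)) atTop (nhds 0) := by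
      simpa using h2.const_mul c₁
    refine squeeze_zero_norm' ?_ h4
    filter_upwards [eventually_ge_atTop (0:ℝ)] with t ht using hF_norm t ht
  -- FTC
  have hF0 : F 0 = B * C := by
    simp only [hFdef, zero_smul, exp_zero, Matrix.one_mul, Matrix.mul_one]
  have hint : (∫ t in Set.Ioi (0:ℝ), G t) = -(B * C) := by
    rw [integral_Ioi_of_hasDerivAt_of_tendsto' (fun t _ => hF_deriv t) hG_int hF_tend, hF0,
      zero_sub]
  -- entry CLM
  have hEcont : ∀ i j : Fin N, Continuous fun Y : Matrix (Fin N) (Fin N) ℝ => Y i j :=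
    fun i j => Continuous.matrix_elem continuous_id i j
  refine ⟨?_, ⟨2*ε, c₁, h2ε, hc₁0, ?_⟩, ?_⟩
  · intro i j
    have h1 : Continuous fun t => F t i j := hF_cont.matrix_elem i j
    have h2 : (fun t => X t i j) = fun t => F t i j := funext fun t => by rw [hXF t]
    rw [h2]
    exact h1
  · intro t ht i j
    have h1 : |X t i j| ≤ ‖F t‖ := by
      rw [hXF t]
      exact entry_le_linfty_norm (F t) i j
    exact h1.trans (hF_norm t ht)
  · intro i j
    have h2 : (fun t => (A * X t + X t * A) i j) = fun t => G t i j :=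
      funext fun t => by rw [hXF t]
    rw [h2]
    let E : Matrix (Fin N) (Fin N) ℝ →L[ℝ] ℝ :=
      { toLinearMap := Matrix.entryLinearMap ℝ ℝ i j
        cont := hEcont i j }
    calc (∫ t in Set.Ioi (0:ℝ), G t i j) = (∫ t in Set.Ioi (0:ℝ), G t) i j :=
          E.integral_comp_comm hG_int
      _ = (-(B * C)) i j := by rw [hint]

end Shielded

end CrossGramianProof
/-- The cross Gramian `W_X = ∫₀^∞ exp(tA) B C exp(tA) dt` solves the Sylvester
equation `A W_X + W_X A = -B C`. -/
theorem crossGramian_solves_sylvester {N M : ℕ}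
    (A : Matrix (Fin N) (Fin N) ℝ) (B : Matrix (Fin N) (Fin M) ℝ)
    (C : Matrix (Fin M) (Fin N) ℝ) (hA : IsHurwitz A) :
    A * (∫ t in Set.Ioi (0 : ℝ), exp (t • A) * B * C * exp (t • A)) +
        (∫ t in Set.Ioi (0 : ℝ), exp (t • A) * B * C * exp (t • A)) * A =
      -(B * C) := by
  obtain ⟨hcont, ⟨ε, c, hε, hc, hbd⟩, hkey⟩ := CrossGramianProof.core A B C hA
  set X : ℝ → Matrix (Fin N) (Fin N) ℝ :=
    fun t => exp (t • A) * B * C * exp (t • A) with hXdef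
  have hXcont : Continuous X := continuous_pi fun i => continuous_pi fun j => hcont i j
  letI : TopologicalSpace (Matrix (Fin N) (Fin N) ℝ) :=
    SeminormedAddGroup.toPseudoMetricSpace.toUniformSpace.toTopologicalSpace
  have hXint : MeasureTheory.IntegrableOn X (Set.Ioi (0:ℝ)) := by
    refine MeasureTheory.Integrable.mono'
      ((exp_neg_integrableOn_Ioi 0 hε).const_mul c)
      (show Continuous X from hXcont).aestronglyMeasurable.restrict ?_
    filter_upwards [MeasureTheory.ae_restrict_mem measurableSet_Ioi] with t ht
    rw [Matrix.norm_le_iff (by positivity)]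
    intro i j
    rw [Real.norm_eq_abs]
    exact hbd t (le_of_lt ht) i j
  have hEcont : ∀ i j : Fin N, Continuous fun Y : Matrix (Fin N) (Fin N) ℝ => Y i j :=
    fun i j => Continuous.matrix_elem continuous_id i j
  set W : Matrix (Fin N) (Fin N) ℝ := ∫ t in Set.Ioi (0:ℝ), X t with hWdef
  have hWentry : ∀ i j : Fin N, W i j = ∫ t in Set.Ioi (0:ℝ), X t i j := by
    intro i j
    exact (ContinuousLinearMap.integral_comp_comm
      { toLinearMap := Matrix.entryLinearMap ℝ ℝ i j, cont := hEcont i j } hXint).symm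
  have hXentry_int : ∀ i j : Fin N,
      MeasureTheory.IntegrableOn (fun t => X t i j) (Set.Ioi (0:ℝ)) := by
    intro i j
    exact ContinuousLinearMap.integrable_comp
      { toLinearMap := Matrix.entryLinearMap ℝ ℝ i j, cont := hEcont i j } hXint
  ext i j
  rw [Matrix.add_apply, Matrix.mul_apply, Matrix.mul_apply]
  have hsum1 : (∑ k, A i k * W k j) = ∫ t in Set.Ioi (0:ℝ), ∑ k, A i k * X t k j := by
    rw [MeasureTheory.integral_finset_sum Finset.univ
      (fun k _ => ((hXentry_int k j).const_mul (A i k)))]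
    refine Finset.sum_congr rfl fun k _ => ?_
    rw [hWentry k j, MeasureTheory.integral_const_mul]
  have hsum2 : (∑ k, W i k * A k j) = ∫ t in Set.Ioi (0:ℝ), ∑ k, X t i k * A k j := by
    rw [MeasureTheory.integral_finset_sum Finset.univ
      (fun k _ => ((hXentry_int i k).mul_const (A k j)))]
    refine Finset.sum_congr rfl fun k _ => ?_
    rw [hWentry i k, MeasureTheory.integral_mul_const]
  rw [hsum1, hsum2, ← MeasureTheory.integral_add
    (MeasureTheory.integrable_finset_sum Finset.univ
      (fun k _ => ((hXentry_int k j).const_mul (A i k))))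
    (MeasureTheory.integrable_finset_sum Finset.univ
      (fun k _ => ((hXentry_int i k).mul_const (A k j))))]
  have hfin : (fun t => (∑ k, A i k * X t k j) + ∑ k, X t i k * A k j)
      = fun t => (A * X t + X t * A) i j := by
    funext t
    rw [Matrix.add_apply, Matrix.mul_apply, Matrix.mul_apply]
  rw [hfin]
  exact hkey i j
end

section
/- Let A ∈ ℝ^{N×N} be Hurwitz, B ∈ ℝ^{N×M} and C ∈ ℝ^{M×N}. If a matrix X ∈ ℝ^{N×N} satisfies the Sylvester equation A·X + X·A = −B·C, then X equals the cross Gramian, i.e. X = ∫₀^∞ exp(tA) B C exp(tA) dt. In particular, the Sylvester equation A X + X A = −B C has a unique solution when A is Hurwitz. -/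
set_option maxHeartbeats 1000000

open MeasureTheory Matrix NormedSpace

namespace SylAux

section Abstract

variable {A' : Type*} [NormedRing A'] [NormedAlgebra ℂ A'] [CompleteSpace A']

lemma exists_poly_exp [FiniteDimensional ℂ A'] (a : A') :
    ∃ q : Polynomial ℂ, Polynomial.aeval a q = exp a := by
  have hmem : exp a ∈ Algebra.adjoin ℂ ({a} : Set A') := by
    have hclosed : IsClosed ((Algebra.adjoin ℂ ({a} : Set A')) : Set A') := by
      have := Submodule.closed_of_finiteDimensional
        (Subalgebra.toSubmodule (Algebra.adjoin ℂ ({a} : Set A')))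
      simpa using this
    have hsum : Summable fun k : ℕ => ((Nat.factorial k : ℂ)⁻¹) • a ^ k := expSeries_summable' a
    have hlim : Filter.Tendsto (fun m : ℕ => ∑ k ∈ Finset.range m, ((Nat.factorial k : ℂ)⁻¹) • a ^ k)
        Filter.atTop (nhds (exp a)) := by
      rw [exp_eq_tsum (𝕂 := ℂ)]; exact hsum.hasSum.tendsto_sum_nat
    refine hclosed.mem_of_tendsto hlim (Filter.Eventually.of_forall fun m => ?_)
    refine Subalgebra.sum_mem _ fun k _ => Subalgebra.smul_mem _ ?_ _
    exact Subalgebra.pow_mem _ (Algebra.subset_adjoin (Set.mem_singleton a)) k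
  rw [Algebra.adjoin_singleton_eq_range_aeval, AlgHom.mem_range] at hmem
  exact hmem

end Abstract

section Linfty

attribute [local instance] Matrix.linftyOpNormedAddCommGroup Matrix.linftyOpNormedRing
  Matrix.linftyOpNormedAlgebra

variable {N : ℕ}

lemma pow_mulVec {n : ℕ} {M : Matrix (Fin n) (Fin n) ℂ} {lam : ℂ} {v : Fin n → ℂ}
    (hv : M *ᵥ v = lam • v) (k : ℕ) : (M ^ k) *ᵥ v = (lam ^ k) • v := by
  induction k with
  | zero => simp
  | succ k ih =>
    rw [pow_succ, ← Matrix.mulVec_mulVec, hv, Matrix.mulVec_smul, ih, smul_smul, pow_succ,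
      mul_comm]

lemma aeval_mulVec {n : ℕ} {M : Matrix (Fin n) (Fin n) ℂ} {lam : ℂ} {v : Fin n → ℂ}
    (hv : M *ᵥ v = lam • v) (q : Polynomial ℂ) :
    (Polynomial.aeval M q) *ᵥ v = q.eval lam • v := by
  induction q using Polynomial.induction_on' with
  | add p q hp hq =>
    rw [map_add, Matrix.add_mulVec, hp, hq, Polynomial.eval_add, add_smul]
  | monomial k a =>
    rw [Polynomial.aeval_monomial, Polynomial.eval_monomial, Algebra.algebraMap_eq_smul_one,
      smul_mul_assoc, one_mul, Matrix.smul_mulVec, pow_mulVec hv, smul_smul]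

lemma exists_eigenvector {n : ℕ} {M : Matrix (Fin n) (Fin n) ℂ} {lam : ℂ}
    (h : lam ∈ spectrum ℂ M) : ∃ v : Fin n → ℂ, v ≠ 0 ∧ M *ᵥ v = lam • v := by
  rw [spectrum.mem_iff] at h
  rw [Matrix.isUnit_iff_isUnit_det, isUnit_iff_ne_zero, not_not,
    ← Matrix.exists_mulVec_eq_zero_iff] at h
  obtain ⟨v, hv0, hv⟩ := h
  refine ⟨v, hv0, ?_⟩
  rw [Matrix.sub_mulVec] at hv
  have : (algebraMap ℂ (Matrix (Fin n) (Fin n) ℂ) lam) *ᵥ v = lam • v := by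
    rw [Algebra.algebraMap_eq_smul_one, Matrix.smul_mulVec, Matrix.one_mulVec]
  rw [this] at hv
  exact (sub_eq_zero.mp hv).symm

lemma exp_mulVec {n : ℕ} {M : Matrix (Fin n) (Fin n) ℂ} {lam : ℂ} {v : Fin n → ℂ}
    (hv : M *ᵥ v = lam • v) : (exp M) *ᵥ v = Complex.exp lam • v := by
  classical
  -- the linear map `P ↦ P *ᵥ v` is continuous
  let Ψ : Matrix (Fin n) (Fin n) ℂ →ₗ[ℂ] (Fin n → ℂ) :=
    { toFun := fun P => P *ᵥ v
      map_add' := fun a b => Matrix.add_mulVec a b v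
      map_smul' := fun c a => Matrix.smul_mulVec c a v }
  have hΨ : Continuous Ψ := Ψ.continuous_of_finiteDimensional
  have hsum : Summable fun k : ℕ => ((Nat.factorial k : ℂ)⁻¹) • M ^ k := expSeries_summable' M
  have hlim : Filter.Tendsto (fun m : ℕ => ∑ k ∈ Finset.range m, ((Nat.factorial k : ℂ)⁻¹) • M ^ k)
      Filter.atTop (nhds (exp M)) := by
    rw [exp_eq_tsum (𝕂 := ℂ)]
    exact hsum.hasSum.tendsto_sum_nat
  have h1 : Filter.Tendsto (fun m : ℕ => Ψ (∑ k ∈ Finset.range m, ((Nat.factorial k : ℂ)⁻¹) • M ^ k))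
      Filter.atTop (nhds (Ψ (exp M))) := (hΨ.tendsto _).comp hlim
  have h2 : ∀ m : ℕ, Ψ (∑ k ∈ Finset.range m, ((Nat.factorial k : ℂ)⁻¹) • M ^ k)
      = (∑ k ∈ Finset.range m, ((Nat.factorial k : ℂ)⁻¹) * lam ^ k) • v := by
    intro m
    rw [map_sum, Finset.sum_smul]
    refine Finset.sum_congr rfl fun k _ => ?_
    rw [LinearMap.map_smul]
    show ((Nat.factorial k : ℂ)⁻¹) • ((M ^ k) *ᵥ v) = _
    rw [pow_mulVec hv, smul_smul]
  have hsc : Filter.Tendsto (fun m : ℕ => ∑ k ∈ Finset.range m, ((Nat.factorial k : ℂ)⁻¹) * lam ^ k)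
      Filter.atTop (nhds (Complex.exp lam)) := by
    have : Summable fun k : ℕ => ((Nat.factorial k : ℂ)⁻¹) • lam ^ k := expSeries_summable' lam
    have h := this.hasSum.tendsto_sum_nat
    have hval : Complex.exp lam = ∑' k : ℕ, (Nat.factorial k : ℂ)⁻¹ • lam ^ k := by
      rw [Complex.exp_eq_exp_ℂ, exp_eq_tsum (𝕂 := ℂ)]
    rw [← hval] at h
    simpa [smul_eq_mul] using h
  have h3 : Filter.Tendsto (fun m : ℕ => (∑ k ∈ Finset.range m, ((Nat.factorial k : ℂ)⁻¹) * lam ^ k) • v)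
      Filter.atTop (nhds (Complex.exp lam • v)) := hsc.smul_const v
  simp only [h2] at h1
  exact tendsto_nhds_unique h1 h3

lemma spectrum_exp_subset {n : ℕ} [Nonempty (Fin n)] (M : Matrix (Fin n) (Fin n) ℂ) :
    spectrum ℂ (exp M) ⊆ Complex.exp '' spectrum ℂ M := by
  classical
  obtain ⟨q, hq⟩ := exists_poly_exp M
  intro z hz
  erw [← hq, spectrum.map_polynomial_aeval] at hz
  obtain ⟨lam, hlam, hev⟩ := hz
  refine ⟨lam, hlam, ?_⟩
  obtain ⟨v, hv0, hv⟩ := exists_eigenvector hlam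
  have h1 : (Polynomial.aeval M q) *ᵥ v = q.eval lam • v := aeval_mulVec hv q
  erw [hq, exp_mulVec hv] at h1
  obtain ⟨x, hx⟩ := Function.ne_iff.mp hv0
  have := congrFun h1 x
  simp only [Pi.smul_apply, smul_eq_mul] at this
  rw [← hev]
  show Complex.exp lam = Polynomial.eval lam q
  exact mul_right_cancel₀ hx this

lemma complex_decay {N : ℕ} [Nonempty (Fin N)] (A : Matrix (Fin N) (Fin N) ℝ)
    (hA : IsHurwitz A) :
    ∃ c ε : ℝ, 0 < ε ∧ 0 ≤ c ∧ ∀ t : ℝ, 0 ≤ t →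
      ‖exp (t • (A.map Complex.ofReal))‖ ≤ c * Real.exp (-ε * t) := by
  classical
  set Ac := A.map Complex.ofReal with hAcdef
  obtain ⟨μ₀, hμ₀, hmax⟩ := (spectrum.isCompact Ac).exists_isMaxOn (spectrum.nonempty Ac)
      Complex.continuous_re.continuousOn
  have hδ : μ₀.re < 0 := hA μ₀ hμ₀
  set δ := μ₀.re with hδdef
  set ε : ℝ := -δ / 2 with hεdef
  have hεpos : 0 < ε := by rw [hεdef]; linarith
  set r : ℝ := Real.exp (-ε) with hrdef
  have hr0 : 0 < r := Real.exp_pos _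
  set rn : NNReal := Real.toNNReal r with hrndef
  have hρ : spectralRadius ℂ (exp Ac) < (rn : ENNReal) := by
    apply spectrum.spectralRadius_lt_of_forall_lt
    intro z hz
    obtain ⟨lam, hlam, rfl⟩ := spectrum_exp_subset Ac hz
    have h1 : ‖Complex.exp lam‖ = Real.exp lam.re := Complex.norm_exp lam
    have h2 : Real.exp lam.re < r := by
      rw [hrdef]
      apply Real.exp_lt_exp.mpr
      have h3 : lam.re ≤ δ := hmax hlam
      rw [hεdef]; linarith
    rw [← NNReal.coe_lt_coe, coe_nnnorm, Real.coe_toNNReal _ hr0.le, h1]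
    exact h2
  have hg := spectrum.pow_nnnorm_pow_one_div_tendsto_nhds_spectralRadius (exp Ac)
  obtain ⟨n₀, hn₀⟩ := Filter.eventually_atTop.mp (hg.eventually_lt_const hρ)
  set n₁ : ℕ := max n₀ 1 with hn₁def
  have hn₁1 : (1 : ℕ) ≤ n₁ := le_max_right _ _
  have hpow : ∀ n : ℕ, n₁ ≤ n → ‖(exp Ac) ^ n‖ ≤ r ^ n := by
    intro n hn
    have hnn : (1 : ℕ) ≤ n := le_trans hn₁1 hn
    have hx := hn₀ n (le_trans (le_max_left _ _) hn)
    have hn0' : ((n:ℝ)) ≠ 0 := Nat.cast_ne_zero.mpr (by omega)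
    have hx2 : ((‖(exp Ac) ^ n‖₊ : ENNReal)) ≤ (rn : ENNReal) ^ (n : ℕ) := by
      calc ((‖(exp Ac) ^ n‖₊ : ENNReal))
          = (((‖(exp Ac) ^ n‖₊ : ENNReal)) ^ (1 / (n:ℝ))) ^ ((n:ℝ)) := by
            rw [← ENNReal.rpow_mul, one_div, inv_mul_cancel₀ hn0', ENNReal.rpow_one]
        _ ≤ ((rn : ENNReal)) ^ ((n:ℝ)) := ENNReal.rpow_le_rpow hx.le (by positivity)
        _ = ((rn : ENNReal)) ^ (n : ℕ) := ENNReal.rpow_natCast _ n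
    rw [← ENNReal.coe_pow, ENNReal.coe_le_coe] at hx2
    calc ‖(exp Ac) ^ n‖ = ((‖(exp Ac) ^ n‖₊ : ℝ)) := rfl
      _ ≤ ((rn ^ n : NNReal) : ℝ) := NNReal.coe_le_coe.mpr hx2
      _ = r ^ n := by rw [NNReal.coe_pow, Real.coe_toNNReal _ hr0.le]
  have hcont : ContinuousOn (fun s : ℝ => exp (s • Ac)) (Set.Icc 0 ((n₁:ℝ)+1)) :=
    (exp_continuous.comp (continuous_id.smul continuous_const)).continuousOn
  obtain ⟨K, hK⟩ := (isCompact_Icc).exists_bound_of_continuousOn hcont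
  have hK0 : 0 ≤ K := le_trans (norm_nonneg _) (hK 0 ⟨le_refl _, by positivity⟩)
  refine ⟨K * Real.exp (ε * ((n₁:ℝ)+1)), ε, hεpos, by positivity, ?_⟩
  intro t ht
  by_cases hcase : t ≤ (n₁:ℝ)+1
  · have h1 : ‖exp (t • Ac)‖ ≤ K := hK t ⟨ht, hcase⟩
    have h2 : (1:ℝ) ≤ Real.exp (ε*((n₁:ℝ)+1)) * Real.exp (-ε*t) := by
      rw [← Real.exp_add]
      apply Real.one_le_exp
      nlinarith
    calc ‖exp (t • Ac)‖ ≤ K := h1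
      _ = K * 1 := (mul_one K).symm
      _ ≤ K * (Real.exp (ε*((n₁:ℝ)+1)) * Real.exp (-ε*t)) :=
          mul_le_mul_of_nonneg_left h2 hK0
      _ = K * Real.exp (ε*((n₁:ℝ)+1)) * Real.exp (-ε*t) := (mul_assoc _ _ _).symm
  · push_neg at hcase
    set n : ℕ := ⌊t⌋₊ with hndef
    have hn_le : (n:ℝ) ≤ t := Nat.floor_le ht
    have hlt : t < (n:ℝ)+1 := Nat.lt_floor_add_one t
    have hn1 : n₁ ≤ n := by
      have h : ((n₁:ℝ)) < (n:ℝ) + 1 := by linarith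
      have h2 : n₁ < n + 1 := by exact_mod_cast h
      omega
    have hcomm : Commute ((t - (n:ℝ)) • Ac) (((n:ℝ)) • Ac) :=
      ((Commute.refl Ac).smul_left _).smul_right _
    have hdecomp : exp (t • Ac) = exp ((t - (n:ℝ)) • Ac) * (exp Ac) ^ n := by
      have h1 : (t - (n:ℝ)) • Ac + ((n:ℝ)) • Ac = t • Ac := by
        rw [← add_smul]; ring_nf
      erw [← h1, exp_add_of_commute hcomm]
      congr 1
      rw [Nat.cast_smul_eq_nsmul ℝ n Ac]
      exact Matrix.exp_nsmul n Ac
    have h1 : ‖exp ((t - (n:ℝ)) • Ac)‖ ≤ K := by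
      refine hK _ ⟨sub_nonneg.mpr hn_le, ?_⟩
      have hcc : (0:ℝ) ≤ (n₁:ℝ) := Nat.cast_nonneg _
      linarith
    have h2 : ‖(exp Ac) ^ n‖ ≤ r ^ n := hpow n hn1
    have h3 : ‖exp (t • Ac)‖ ≤ K * r ^ n := by
      rw [hdecomp]
      exact le_trans (norm_mul_le _ _) (mul_le_mul h1 h2 (norm_nonneg _) hK0)
    have h4 : r ^ n = Real.exp ((n:ℝ) * (-ε)) := (Real.exp_nat_mul (-ε) n).symm
    have h5 : Real.exp ((n:ℝ) * (-ε)) ≤ Real.exp (ε*((n₁:ℝ)+1)) * Real.exp (-ε*t) := by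
      rw [← Real.exp_add]
      apply Real.exp_le_exp.mpr
      have hc1 : t - (n:ℝ) ≤ 1 := by linarith
      have hcc : (0:ℝ) ≤ (n₁:ℝ) := Nat.cast_nonneg _
      nlinarith [mul_le_mul_of_nonneg_left hc1 hεpos.le]
    calc ‖exp (t • Ac)‖ ≤ K * r ^ n := h3
      _ = K * Real.exp ((n:ℝ) * (-ε)) := by rw [h4]
      _ ≤ K * (Real.exp (ε*((n₁:ℝ)+1)) * Real.exp (-ε*t)) := mul_le_mul_of_nonneg_left h5 hK0
      _ = K * Real.exp (ε*((n₁:ℝ)+1)) * Real.exp (-ε*t) := (mul_assoc _ _ _).symm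

lemma map_exp_ofReal {N : ℕ} (A : Matrix (Fin N) (Fin N) ℝ) (t : ℝ) :
    (exp (t • A)).map Complex.ofReal = exp (t • (A.map Complex.ofReal)) := by
  classical
  let L : Matrix (Fin N) (Fin N) ℝ →ₗ[ℝ] Matrix (Fin N) (Fin N) ℂ :=
    { toFun := fun P => P.map Complex.ofReal
      map_add' := fun P Q => by ext i j; simp [Matrix.map_apply]
      map_smul' := fun c P => by ext i j; simp [Matrix.map_apply, Complex.real_smul] }
  have hφ : Continuous fun P : Matrix (Fin N) (Fin N) ℝ => P.map Complex.ofReal :=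
    L.continuous_of_finiteDimensional
  have h1 := map_exp (Complex.ofRealHom.mapMatrix :
    Matrix (Fin N) (Fin N) ℝ →+* Matrix (Fin N) (Fin N) ℂ) hφ (t • A)
  have h2 : (Complex.ofRealHom.mapMatrix (t • A) : Matrix (Fin N) (Fin N) ℂ)
      = t • A.map Complex.ofReal := by
    ext i j
    simp [Matrix.map_apply, Complex.real_smul]
  have h3 : (exp (t • A)).map Complex.ofReal
      = exp (t • A.map Complex.ofReal) := by
    rw [← h2]; exact h1
  rw [h3]

lemma linfty_norm_map {N : ℕ} (P : Matrix (Fin N) (Fin N) ℝ) :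
    ‖P.map Complex.ofReal‖ = ‖P‖ := by
  have h : ‖P.map Complex.ofReal‖₊ = ‖P‖₊ := by
    rw [Matrix.linfty_opNNNorm_def, Matrix.linfty_opNNNorm_def]
    congr 1
    funext i
    refine Finset.sum_congr rfl fun j _ => ?_
    simp [Matrix.map_apply]
  calc ‖P.map Complex.ofReal‖ = ((‖P.map Complex.ofReal‖₊ : ℝ)) := rfl
    _ = ((‖P‖₊ : ℝ)) := by rw [h]
    _ = ‖P‖ := rfl

lemma entry_le_linfty_norm {N : ℕ} (P : Matrix (Fin N) (Fin N) ℝ) (i j : Fin N) :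
    |P i j| ≤ ‖P‖ := by
  have h : ‖P i j‖₊ ≤ ‖P‖₊ := by
    rw [Matrix.linfty_opNNNorm_def]
    refine le_trans ?_ (Finset.le_sup (Finset.mem_univ i))
    exact Finset.single_le_sum (f := fun k => ‖P i k‖₊) (fun k _ => zero_le)
      (Finset.mem_univ j)
  have h2 := NNReal.coe_le_coe.mpr h
  simpa [Real.norm_eq_abs] using h2

lemma entry_decay {N : ℕ} [Nonempty (Fin N)] (A M : Matrix (Fin N) (Fin N) ℝ)
    (hA : IsHurwitz A) :
    ∃ c ε : ℝ, 0 < ε ∧ ∀ t : ℝ, 0 ≤ t → ∀ i j,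
      |(exp (t • A) * M * exp (t • A)) i j| ≤ c * Real.exp (-ε * t) := by
  obtain ⟨c, ε, hε, hc0, hbd⟩ := complex_decay A hA
  refine ⟨c * ‖M‖ * c, ε, hε, ?_⟩
  intro t ht i j
  have hE : ‖exp (t • A)‖ ≤ c * Real.exp (-ε * t) := by
    rw [← linfty_norm_map, map_exp_ofReal]
    exact hbd t ht
  have hEn : (0:ℝ) ≤ ‖exp (t • A)‖ := norm_nonneg _
  have h1 : |(exp (t • A) * M * exp (t • A)) i j|
      ≤ ‖exp (t • A)‖ * ‖M‖ * ‖exp (t • A)‖ := by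
    refine (entry_le_linfty_norm _ i j).trans ?_
    refine (Matrix.linfty_opNorm_mul _ _).trans ?_
    exact mul_le_mul_of_nonneg_right (Matrix.linfty_opNorm_mul _ _) (norm_nonneg _)
  have hex1 : Real.exp (-ε * t) ≤ 1 := by
    apply Real.exp_le_one_iff.mpr
    nlinarith
  have hexpos : (0:ℝ) < Real.exp (-ε * t) := Real.exp_pos _
  have hM0 : (0:ℝ) ≤ ‖M‖ := norm_nonneg _
  have hsq : ‖exp (t • A)‖ * ‖exp (t • A)‖
      ≤ (c * Real.exp (-ε * t)) * (c * Real.exp (-ε * t)) :=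
    mul_le_mul hE hE hEn (by positivity)
  calc |(exp (t • A) * M * exp (t • A)) i j|
      ≤ ‖exp (t • A)‖ * ‖M‖ * ‖exp (t • A)‖ := h1
    _ = (‖exp (t • A)‖ * ‖exp (t • A)‖) * ‖M‖ := by ring
    _ ≤ (c * Real.exp (-ε * t) * (c * Real.exp (-ε * t))) * ‖M‖ :=
        mul_le_mul_of_nonneg_right hsq hM0
    _ = (c * ‖M‖ * c) * (Real.exp (-ε * t) * Real.exp (-ε * t)) := by ring
    _ ≤ (c * ‖M‖ * c) * Real.exp (-ε * t) := by
        refine mul_le_mul_of_nonneg_left ?_ (by positivity)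
        nlinarith

lemma entry_hasDerivAt {N : ℕ} (A M : Matrix (Fin N) (Fin N) ℝ) (t : ℝ) (i j : Fin N) :
    HasDerivAt (fun s : ℝ => (exp (s • A) * M * exp (s • A)) i j)
      ((exp (t • A) * (A * M + M * A) * exp (t • A)) i j) t := by
  classical
  have h1 : HasDerivAt (fun s : ℝ => exp (s • A)) (A * exp (t • A)) t :=
    hasDerivAt_exp_smul_const' A t
  have h2 : HasDerivAt (fun s : ℝ => exp (s • A)) (exp (t • A) * A) t :=
    hasDerivAt_exp_smul_const A t
  have h3 := (h2.mul_const M).mul h1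
  have hkey : exp (t • A) * A * M * exp (t • A) + exp (t • A) * M * (A * exp (t • A))
      = exp (t • A) * (A * M + M * A) * exp (t • A) := by
    simp only [mul_add, add_mul, mul_assoc]
  rw [← hkey]
  let L : Matrix (Fin N) (Fin N) ℝ →ₗ[ℝ] ℝ :=
    { toFun := fun P => P i j, map_add' := fun _ _ => rfl, map_smul' := fun _ _ => rfl }
  let Lc : Matrix (Fin N) (Fin N) ℝ →L[ℝ] ℝ := LinearMap.toContinuousLinearMap L
  have h4 := (Lc.hasFDerivAt.comp_hasDerivAt t h3)
  exact h4

end Linfty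

section PiNorm

attribute [local instance] Matrix.normedAddCommGroup Matrix.normedSpace

/-- the continuous extended norm of real matrices, for the product topology -/
def matCENorm {n m : ℕ} : ContinuousENorm (Matrix (Fin n) (Fin m) ℝ) :=
  SeminormedAddGroup.toContinuousENorm

/-- the product topology on real matrices is pseudo-metrizable -/
def matPMS {n m : ℕ} : TopologicalSpace.PseudoMetrizableSpace (Matrix (Fin n) (Fin m) ℝ) :=
  inferInstanceAs (TopologicalSpace.PseudoMetrizableSpace (Fin n → Fin m → ℝ))

attribute [local instance] matCENorm matPMS

lemma key_integral {N M' : ℕ} [Nonempty (Fin N)] (A : Matrix (Fin N) (Fin N) ℝ)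
    (B : Matrix (Fin N) (Fin M') ℝ) (C : Matrix (Fin M') (Fin N) ℝ) (hA : IsHurwitz A)
    (X : Matrix (Fin N) (Fin N) ℝ) (hX : A * X + X * A = -(B * C)) :
    X = ∫ t in Set.Ioi (0 : ℝ), exp (t • A) * B * C * exp (t • A) := by
  classical
  set G := B * C with hG
  set f : ℝ → Matrix (Fin N) (Fin N) ℝ := fun t => -(exp (t • A) * X * exp (t • A)) with hf
  set g : ℝ → Matrix (Fin N) (Fin N) ℝ := fun t => exp (t • A) * G * exp (t • A) with hg
  have hfun : (fun t : ℝ => exp (t • A) * B * C * exp (t • A)) = g := by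
    funext t
    rw [hg, hG, Matrix.mul_assoc (exp (t • A)) B C]
  have hmatderiv : ∀ t : ℝ, HasDerivAt f (g t) t := by
    intro t
    have hEq : exp (t • A) * (A * X + X * A) * exp (t • A) = -(g t) := by
      rw [hX, hg, hG]
      simp only [mul_neg, neg_mul]
    have hpos : HasDerivAt (fun s : ℝ => exp (s • A) * X * exp (s • A)) (-(g t)) t := by
      rw [← hEq]
      apply hasDerivAt_pi.mpr
      intro i
      apply hasDerivAt_pi.mpr
      intro j
      exact entry_hasDerivAt A X t i j
    have hneg := hpos.neg
    rw [neg_neg] at hneg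
    exact hneg
  have hgcont : Continuous g := by
    apply continuous_pi
    intro i
    apply continuous_pi
    intro j
    refine continuous_iff_continuousAt.mpr fun t => ?_
    exact (entry_hasDerivAt A G t i j).continuousAt
  obtain ⟨c, ε, hε, hbd⟩ := entry_decay A G hA
  have hintg : IntegrableOn g (Set.Ioi (0:ℝ)) := by
    have hint0 : IntegrableOn (fun t : ℝ => (max c 0) * Real.exp (-ε * t)) (Set.Ioi (0:ℝ)) :=
      (exp_neg_integrableOn_Ioi 0 hε).const_mul _
    refine MeasureTheory.Integrable.mono' hint0 hgcont.aestronglyMeasurable.restrict ?_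
    filter_upwards [ae_restrict_mem measurableSet_Ioi] with t ht
    refine (Matrix.norm_le_iff (by positivity)).mpr fun i j => ?_
    rw [Real.norm_eq_abs]
    exact (hbd t (le_of_lt ht) i j).trans
      (mul_le_mul_of_nonneg_right (le_max_left c 0) (Real.exp_pos _).le)
  have htend : Filter.Tendsto f Filter.atTop (nhds 0) := by
    obtain ⟨c', ε', hε', hbd'⟩ := entry_decay A X hA
    apply squeeze_zero_norm' (a := fun t : ℝ => (max c' 0) * Real.exp (-ε' * t))
    · filter_upwards [Filter.eventually_ge_atTop (0:ℝ)] with t ht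
      rw [hf]
      show ‖-(exp (t • A) * X * exp (t • A))‖ ≤ _
      rw [norm_neg]
      refine (Matrix.norm_le_iff (by positivity)).mpr fun i j => ?_
      rw [Real.norm_eq_abs]
      exact (hbd' t ht i j).trans
        (mul_le_mul_of_nonneg_right (le_max_left c' 0) (Real.exp_pos _).le)
    · have h0 : Filter.Tendsto (fun t : ℝ => Real.exp (-ε' * t)) Filter.atTop (nhds 0) := by
        apply Real.tendsto_exp_atBot.comp
        exact Filter.Tendsto.const_mul_atTop_of_neg (neg_lt_zero.mpr hε') Filter.tendsto_id
      simpa using h0.const_mul (max c' 0)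
  have hcont0 : ContinuousWithinAt f (Set.Ici (0:ℝ)) 0 :=
    ((hmatderiv 0).continuousAt).continuousWithinAt
  have hFTC := MeasureTheory.integral_Ioi_of_hasDerivAt_of_tendsto hcont0
    (fun x _ => hmatderiv x) hintg htend
  have hf0 : f 0 = -X := by
    rw [hf]
    simp [zero_smul, exp_zero]
  rw [hfun, hFTC, hf0, sub_neg_eq_add, zero_add]

end PiNorm


end SylAux

attribute [local instance] Matrix.normedAddCommGroup Matrix.normedSpace

/-- For Hurwitz `A`, any solution `X` of the Sylvester equation `A X + X A = -B C`
equals the cross Gramian `∫₀^∞ exp(tA) B C exp(tA) dt`; in particular the Sylvester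
equation has a unique solution. -/
theorem sylvester_solution_eq_crossGramian {N M : ℕ}
    (A : Matrix (Fin N) (Fin N) ℝ) (B : Matrix (Fin N) (Fin M) ℝ)
    (C : Matrix (Fin M) (Fin N) ℝ) (hA : IsHurwitz A)
    (X : Matrix (Fin N) (Fin N) ℝ) (hX : A * X + X * A = -(B * C)) :
    X = (∫ t in Set.Ioi (0 : ℝ), NormedSpace.exp (t • A) * B * C * NormedSpace.exp (t • A)) ∧
      ∃! Y : Matrix (Fin N) (Fin N) ℝ, A * Y + Y * A = -(B * C) := by
  rcases Nat.eq_zero_or_pos N with hN | hN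
  · subst hN
    haveI : Subsingleton (Matrix (Fin 0) (Fin 0) ℝ) :=
      ⟨fun a b => funext fun i => i.elim0⟩
    exact ⟨Subsingleton.elim _ _, X, hX, fun Y _ => Subsingleton.elim _ _⟩
  · haveI : Nonempty (Fin N) := ⟨⟨0, hN⟩⟩
    refine ⟨SylAux.key_integral A B C hA X hX, X, hX, fun Y hY => ?_⟩
    rw [SylAux.key_integral A B C hA Y hY, SylAux.key_integral A B C hA X hX]
end

section
/- Let A ∈ ℝ^{N×N} be Hurwitz and B ∈ ℝ^{N×M}. Then the controllability Gramian W_C = ∫₀^∞ exp(tA) B Bᵀ exp(tAᵀ) dt is well defined and solves the Lyapunov matrix equation A·W_C + W_C·Aᵀ = −B·Bᵀ. -/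
open MeasureTheory Matrix NormedSpace
open Filter Nat

section AuxDecay
attribute [local instance] Matrix.linftyOpNormedAddCommGroup Matrix.linftyOpNormedRing
  Matrix.linftyOpNormedAlgebra

variable {N : ℕ}

theorem aux_pow_mul_exp_le (i : ℕ) {ε : ℝ} (hε : 0 < ε) {t : ℝ} (ht : 0 ≤ t) :
    t ^ i * Real.exp (-(ε * t)) ≤ (i ! : ℝ) / ε ^ i := by
  have hfac : (0:ℝ) < (i ! : ℝ) := by positivity
  have h1 : (ε * t) ^ i / (i ! : ℝ) ≤ Real.exp (ε * t) := by
    calc (ε * t) ^ i / (i ! : ℝ)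
        ≤ ∑ j ∈ Finset.range (i + 1), (ε * t) ^ j / (j ! : ℝ) := by
          refine Finset.single_le_sum (f := fun j => (ε * t) ^ j / (j ! : ℝ)) ?_
            (Finset.self_mem_range_succ i)
          intro j _
          positivity
      _ ≤ Real.exp (ε * t) := Real.sum_le_exp_of_nonneg (by positivity) _
  have key : ε ^ i * t ^ i ≤ (i ! : ℝ) * Real.exp (ε * t) := by
    rw [div_le_iff₀ hfac] at h1
    calc ε ^ i * t ^ i = (ε * t) ^ i := (mul_pow _ _ _).symm
      _ ≤ Real.exp (ε * t) * (i ! : ℝ) := h1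
      _ = (i ! : ℝ) * Real.exp (ε * t) := mul_comm _ _
  rw [le_div_iff₀ (pow_pos hε i), Real.exp_neg]
  have h2 := mul_le_mul_of_nonneg_right key (inv_nonneg.2 (Real.exp_pos (ε * t)).le)
  rw [mul_assoc ((i ! : ℝ)), mul_inv_cancel₀ (Real.exp_pos (ε * t)).ne', mul_one] at h2
  nlinarith [h2]

theorem aux_exp_mulVec (A' : Matrix (Fin N) (Fin N) ℂ) (μ : ℂ) (v : Fin N → ℂ) (k : ℕ)
    (hv : ((A' - μ • 1) ^ k).mulVec v = 0) (z : ℂ) :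
    (exp (z • A')).mulVec v =
      Complex.exp (z * μ) •
        ∑ i ∈ Finset.range k, (z ^ i * ((i ! : ℂ))⁻¹) • ((A' - μ • 1) ^ i).mulVec v := by
  classical
  set T := A' - μ • 1 with hT
  have hsplit : z • A' = algebraMap ℂ (Matrix (Fin N) (Fin N) ℂ) (z * μ) + z • T := by
    rw [Algebra.algebraMap_eq_smul_one, hT]
    module
  have hcomm : Commute (algebraMap ℂ (Matrix (Fin N) (Fin N) ℂ) (z * μ)) (z • T) :=
    Algebra.commute_algebraMap_left _ _
  rw [hsplit, Matrix.exp_add_of_commute _ _ hcomm]; erw [← algebraMap_exp_comm]; rw [ ← Complex.exp_eq_exp_ℂ,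
    Algebra.algebraMap_eq_smul_one, smul_one_mul, Matrix.smul_mulVec]
  congr 1
  -- now: (exp (z • T)).mulVec v = ∑ ...
  let L : Matrix (Fin N) (Fin N) ℂ →ₗ[ℂ] (Fin N → ℂ) :=
    { toFun := fun M => M.mulVec v
      map_add' := fun M N => Matrix.add_mulVec M N v
      map_smul' := fun c M => Matrix.smul_mulVec c M v }
  let L' : Matrix (Fin N) (Fin N) ℂ →L[ℂ] (Fin N → ℂ) := LinearMap.toContinuousLinearMap L
  have hL' : ∀ M, L' M = M.mulVec v := fun _ => rfl
  have hsum : Summable fun i : ℕ => ((i ! : ℂ))⁻¹ • (z • T) ^ i := expSeries_summable' (z • T)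
  have : (exp (z • T)).mulVec v = ∑' i : ℕ, ((i ! : ℂ))⁻¹ • ((z • T) ^ i).mulVec v := by
    rw [exp_eq_tsum ℂ, ← hL', ContinuousLinearMap.map_tsum L' hsum]
    simp only [_root_.map_smul, hL', Matrix.smul_mulVec]
  rw [this]
  rw [tsum_eq_sum (s := Finset.range k) ?_]
  · refine Finset.sum_congr rfl fun i _ => ?_
    rw [smul_pow, Matrix.smul_mulVec, smul_smul, mul_comm]
  · intro i hi
    have hki : k ≤ i := Nat.le_of_not_lt fun h => hi (Finset.mem_range.mpr h)
    rw [smul_pow, Matrix.smul_mulVec]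
    have hz : T ^ i *ᵥ v = 0 := by
      rw [← Nat.sub_add_cancel hki, pow_add, ← Matrix.mulVec_mulVec, hv, Matrix.mulVec_zero]
    rw [hz, smul_zero, smul_zero]

theorem aux_exp_map (A : Matrix (Fin N) (Fin N) ℝ) (t : ℝ) :
    (exp (t • A)).map Complex.ofReal = exp ((t : ℂ) • A.map Complex.ofReal) := by
  have hcont : Continuous (Complex.ofRealHom.mapMatrix :
      Matrix (Fin N) (Fin N) ℝ →+* Matrix (Fin N) (Fin N) ℂ) :=
    continuous_id.matrix_map Complex.continuous_ofReal
  have h1 := map_exp (Complex.ofRealHom.mapMatrix :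
      Matrix (Fin N) (Fin N) ℝ →+* Matrix (Fin N) (Fin N) ℂ) hcont (t • A)
  have h2 : (Complex.ofRealHom.mapMatrix (t • A) : Matrix (Fin N) (Fin N) ℂ)
      = (t : ℂ) • A.map Complex.ofReal := by
    ext i j
    simp [RingHom.mapMatrix_apply, Matrix.map_apply, Complex.real_smul]
  calc (exp (t • A)).map Complex.ofReal
      = Complex.ofRealHom.mapMatrix (exp (t • A)) := rfl
    _ = exp (Complex.ofRealHom.mapMatrix (t • A)) := h1
    _ = exp ((t : ℂ) • A.map Complex.ofReal) := by rw [h2]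

set_option maxHeartbeats 1000000 in
theorem aux_decay (A : Matrix (Fin N) (Fin N) ℝ)
    (hA : ∀ μ ∈ spectrum ℂ (A.map Complex.ofReal), μ.re < 0) :
    ∃ ε : ℝ, 0 < ε ∧ ∃ C : ℝ, 0 < C ∧
      ∀ t : ℝ, 0 ≤ t → ∀ i j, |exp (t • A) i j| ≤ C * Real.exp (-(ε * t)) := by
  classical
  set A' := A.map Complex.ofReal with hA'
  set f : Module.End ℂ (Fin N → ℂ) := Matrix.toLinAlgEquiv' A' with hf
  have htop : ⨆ μ, f.maxGenEigenspace μ = ⊤ := Module.End.iSup_maxGenEigenspace_eq_top f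
  have hdec : ∀ j : Fin N, ∃ d : ℂ →₀ (Fin N → ℂ),
      (∀ μ, d μ ∈ f.maxGenEigenspace μ) ∧ (d.sum fun _ x => x) = Pi.single j 1 := by
    intro j
    have : (Pi.single j 1 : Fin N → ℂ) ∈ ⨆ μ, f.maxGenEigenspace μ := by
      rw [htop]; trivial
    exact (Submodule.mem_iSup_iff_exists_finsupp _ _).mp this
  choose d hd1 hd2 using hdec
  -- spectra of support elements are negative
  have hsupp : ∀ j : Fin N, ∀ μ ∈ (d j).support, μ.re < 0 := by
    intro j μ hμ
    apply hA
    have hspec : spectrum ℂ f = spectrum ℂ A' := AlgEquiv.spectrum_eq Matrix.toLinAlgEquiv' A'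
    rw [← hspec, ← Module.End.hasEigenvalue_iff_mem_spectrum]
    have hv0 : d j μ ≠ 0 := Finsupp.mem_support_iff.mp hμ
    obtain ⟨k, hk⟩ := (Module.End.mem_maxGenEigenspace f μ _).mp (hd1 j μ)
    refine Module.End.hasEigenvalue_of_hasGenEigenvalue (k := k) ?_
    rw [Module.End.hasGenEigenvalue_iff, Module.End.genEigenspace_nat]
    exact Submodule.ne_bot_iff _ |>.mpr ⟨d j μ, LinearMap.mem_ker.mpr hk, hv0⟩
  -- choose ε
  set S : Finset ℂ := Finset.univ.biUnion (fun j : Fin N => (d j).support) with hS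
  set E : Finset ℝ := insert 1 (S.image fun μ => -μ.re / 2) with hE
  have hEne : E.Nonempty := Finset.insert_nonempty _ _
  set ε := E.min' hEne with hεdef
  have hSneg : ∀ μ ∈ S, μ.re < 0 := by
    intro μ hμ
    obtain ⟨j, _, hj⟩ := Finset.mem_biUnion.mp hμ
    exact hsupp j μ hj
  have hε : 0 < ε := by
    have hmem := E.min'_mem hEne
    rcases Finset.mem_insert.mp hmem with h | h
    · rw [hεdef] at *; rw [h]; norm_num
    · obtain ⟨μ, hμS, hμ⟩ := Finset.mem_image.mp h
      have := hSneg μ hμS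
      rw [hεdef] at *; rw [← hμ]; linarith
  have hεle : ∀ μ ∈ S, μ.re ≤ -(2 * ε) := by
    intro μ hμ
    have h1 : ε ≤ -μ.re / 2 := Finset.min'_le _ _
      (Finset.mem_insert_of_mem (Finset.mem_image_of_mem _ hμ))
    linarith
  -- per (j, μ) bound
  have key : ∀ j : Fin N, ∀ μ ∈ (d j).support, ∃ C : ℝ, 0 ≤ C ∧ ∀ t : ℝ, 0 ≤ t →
      ‖(exp ((t : ℂ) • A')).mulVec (d j μ)‖ ≤ C * Real.exp (-(ε * t)) := by
    intro j μ hμ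
    obtain ⟨k, hk⟩ := (Module.End.mem_maxGenEigenspace f μ _).mp (hd1 j μ)
    have hk' : ((A' - μ • 1) ^ k).mulVec (d j μ) = 0 := by
      have hfμ : f - μ • 1 = Matrix.toLinAlgEquiv' (A' - μ • (1 : Matrix (Fin N) (Fin N) ℂ)) := by
        rw [map_sub, hf]
        congr 1
        simp [_root_.map_smul]
      have hk2 : ((f - μ • 1) ^ k) (d j μ) = 0 := hk
      rwa [hfμ, ← map_pow, Matrix.toLinAlgEquiv'_apply] at hk2
    refine ⟨∑ i ∈ Finset.range k,
      (i ! : ℝ)⁻¹ * ‖((A' - μ • 1) ^ i).mulVec (d j μ)‖ * ((i ! : ℝ) / ε ^ i),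
      Finset.sum_nonneg fun i _ => by positivity, ?_⟩
    intro t ht
    rw [aux_exp_mulVec A' μ (d j μ) k hk' (t : ℂ)]
    have hre : ((t : ℂ) * μ).re = t * μ.re := by simp
    have hnexp : ‖Complex.exp ((t : ℂ) * μ)‖ = Real.exp (t * μ.re) := by
      rw [Complex.norm_exp, hre]
    calc ‖Complex.exp ((t : ℂ) * μ) •
          ∑ i ∈ Finset.range k, ((t : ℂ) ^ i * ((i ! : ℂ))⁻¹) • ((A' - μ • 1) ^ i).mulVec (d j μ)‖
        = Real.exp (t * μ.re) *
          ‖∑ i ∈ Finset.range k, ((t : ℂ) ^ i * ((i ! : ℂ))⁻¹) • ((A' - μ • 1) ^ i).mulVec (d j μ)‖ := by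
          rw [norm_smul, hnexp]
      _ ≤ Real.exp (t * μ.re) *
          ∑ i ∈ Finset.range k, ‖((t : ℂ) ^ i * ((i ! : ℂ))⁻¹) • ((A' - μ • 1) ^ i).mulVec (d j μ)‖ := by
          exact mul_le_mul_of_nonneg_left (norm_sum_le _ _) (Real.exp_pos _).le
      _ = ∑ i ∈ Finset.range k, Real.exp (t * μ.re) *
            (t ^ i * (i ! : ℝ)⁻¹ * ‖((A' - μ • 1) ^ i).mulVec (d j μ)‖) := by
          rw [Finset.mul_sum]
          refine Finset.sum_congr rfl fun i _ => ?_
          rw [norm_smul, norm_mul, norm_pow, norm_inv, Complex.norm_real, Real.norm_eq_abs,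
            abs_of_nonneg ht]
          norm_num
      _ ≤ ∑ i ∈ Finset.range k,
            ((i ! : ℝ)⁻¹ * ‖((A' - μ • 1) ^ i).mulVec (d j μ)‖ * ((i ! : ℝ) / ε ^ i))
              * Real.exp (-(ε * t)) := by
          refine Finset.sum_le_sum fun i _ => ?_
          have h1 : Real.exp (t * μ.re) ≤ Real.exp (-(2 * ε) * t) := by
            apply Real.exp_le_exp.mpr
            have := hεle μ (Finset.mem_biUnion.mpr ⟨j, Finset.mem_univ j, hμ⟩)
            nlinarith
          have h2 : t ^ i * Real.exp (-(ε * t)) ≤ (i ! : ℝ) / ε ^ i := aux_pow_mul_exp_le i hε ht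
          have h3 : Real.exp (-(2 * ε) * t) = Real.exp (-(ε * t)) * Real.exp (-(ε * t)) := by
            rw [← Real.exp_add]; ring_nf
          have hw : (0:ℝ) ≤ ‖((A' - μ • 1) ^ i).mulVec (d j μ)‖ := norm_nonneg _
          have hfi : (0:ℝ) < (i ! : ℝ)⁻¹ := by positivity
          have hexp0 : (0:ℝ) < Real.exp (-(ε * t)) := Real.exp_pos _
          calc Real.exp (t * μ.re) * (t ^ i * (i ! : ℝ)⁻¹ * ‖((A' - μ • 1) ^ i).mulVec (d j μ)‖)
              ≤ Real.exp (-(2 * ε) * t) * (t ^ i * (i ! : ℝ)⁻¹ * ‖((A' - μ • 1) ^ i).mulVec (d j μ)‖) := by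
                have hnn : (0:ℝ) ≤ t ^ i * (i ! : ℝ)⁻¹ * ‖((A' - μ • 1) ^ i).mulVec (d j μ)‖ := by positivity
                exact mul_le_mul_of_nonneg_right h1 hnn
            _ = (t ^ i * Real.exp (-(ε * t))) * ((i ! : ℝ)⁻¹ * ‖((A' - μ • 1) ^ i).mulVec (d j μ)‖)
                  * Real.exp (-(ε * t)) := by rw [h3]; ring
            _ ≤ ((i ! : ℝ) / ε ^ i) * ((i ! : ℝ)⁻¹ * ‖((A' - μ • 1) ^ i).mulVec (d j μ)‖)
                  * Real.exp (-(ε * t)) := by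
                have hnn : (0:ℝ) ≤ (i ! : ℝ)⁻¹ * ‖((A' - μ • 1) ^ i).mulVec (d j μ)‖ := by positivity
                exact mul_le_mul_of_nonneg_right (mul_le_mul_of_nonneg_right h2 hnn) hexp0.le
            _ = ((i ! : ℝ)⁻¹ * ‖((A' - μ • 1) ^ i).mulVec (d j μ)‖ * ((i ! : ℝ) / ε ^ i))
                  * Real.exp (-(ε * t)) := by ring
      _ = (∑ i ∈ Finset.range k,
            (i ! : ℝ)⁻¹ * ‖((A' - μ • 1) ^ i).mulVec (d j μ)‖ * ((i ! : ℝ) / ε ^ i))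
              * Real.exp (-(ε * t)) := by rw [Finset.sum_mul]
  -- per j bound
  have keyj : ∀ j : Fin N, ∃ C : ℝ, 0 ≤ C ∧ ∀ t : ℝ, 0 ≤ t →
      ‖(exp ((t : ℂ) • A')).mulVec (Pi.single j 1)‖ ≤ C * Real.exp (-(ε * t)) := by
    intro j
    have hchoice := fun (μ : {μ // μ ∈ (d j).support}) => key j μ.1 μ.2
    choose Cs hCs0 hCs using hchoice
    refine ⟨∑ μ ∈ (d j).support.attach, Cs μ, Finset.sum_nonneg fun μ _ => hCs0 μ, ?_⟩
    intro t ht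
    have hsingle : (Pi.single j 1 : Fin N → ℂ) = ∑ μ ∈ (d j).support.attach, d j μ.1 := by
      rw [← hd2 j, Finsupp.sum, ← Finset.sum_attach]
    rw [hsingle]
    have hmv : (exp ((t : ℂ) • A')).mulVec (∑ μ ∈ (d j).support.attach, d j μ.1)
        = ∑ μ ∈ (d j).support.attach, (exp ((t : ℂ) • A')).mulVec (d j μ.1) := by
      simp only [← Matrix.mulVecLin_apply]
      exact map_sum _ _ _
    rw [hmv]
    calc ‖∑ μ ∈ (d j).support.attach, (exp ((t : ℂ) • A')).mulVec (d j μ.1)‖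
        ≤ ∑ μ ∈ (d j).support.attach, ‖(exp ((t : ℂ) • A')).mulVec (d j μ.1)‖ :=
          norm_sum_le _ _
      _ ≤ ∑ μ ∈ (d j).support.attach, Cs μ * Real.exp (-(ε * t)) :=
          Finset.sum_le_sum fun μ _ => hCs μ t ht
      _ = (∑ μ ∈ (d j).support.attach, Cs μ) * Real.exp (-(ε * t)) := by rw [Finset.sum_mul]
  choose Cj hCj0 hCj using keyj
  refine ⟨ε, hε, 1 + ∑ j : Fin N, Cj j,
    by linarith [Finset.sum_nonneg (fun (j : Fin N) (_ : j ∈ Finset.univ) => hCj0 j)], ?_⟩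
  intro t ht i j
  have hentry : |exp (t • A) i j| = ‖(exp ((t : ℂ) • A')) i j‖ := by
    rw [← aux_exp_map A t, Matrix.map_apply, Complex.norm_real, Real.norm_eq_abs]
  rw [hentry]
  have hev : (exp ((t : ℂ) • A')) i j
      = ((exp ((t : ℂ) • A')).mulVec (Pi.single j 1)) i := by
    rw [Matrix.mulVec_single]
    simp
  rw [hev]
  calc ‖((exp ((t : ℂ) • A')).mulVec (Pi.single j 1)) i‖
      ≤ ‖(exp ((t : ℂ) • A')).mulVec (Pi.single j 1)‖ := norm_le_pi_norm _ i
    _ ≤ Cj j * Real.exp (-(ε * t)) := hCj j t ht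
    _ ≤ (1 + ∑ j' : Fin N, Cj j') * Real.exp (-(ε * t)) := by
        have h1 : Cj j ≤ 1 + ∑ j' : Fin N, Cj j' := by
          have h2 : Cj j ≤ ∑ j' : Fin N, Cj j' :=
            Finset.single_le_sum (fun j' _ => hCj0 j') (Finset.mem_univ j)
          linarith
        exact mul_le_mul_of_nonneg_right h1 (Real.exp_pos _).le

theorem aux_slope (A : Matrix (Fin N) (Fin N) ℝ) (t : ℝ) :
    Filter.Tendsto (slope (fun s : ℝ => exp (s • A)) t) (nhdsWithin t {t}ᶜ)
      (nhds (A * exp (t • A))) :=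
  hasDerivAt_iff_tendsto_slope.mp (hasDerivAt_exp_smul_const' A t)

theorem aux_comm (A : Matrix (Fin N) (Fin N) ℝ) (t : ℝ) :
    A * exp (t • A) = exp (t • A) * A :=
  (((Commute.refl A).smul_right t).exp_right).eq

end AuxDecay

attribute [local instance] Matrix.normedAddCommGroup Matrix.normedSpace

theorem matrix_sup_norm_mul_le {a b c : ℕ} (X : Matrix (Fin a) (Fin b) ℝ)
    (Y : Matrix (Fin b) (Fin c) ℝ) : ‖X * Y‖ ≤ (b : ℝ) * ‖X‖ * ‖Y‖ := by
  rw [Matrix.norm_le_iff (by positivity)]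
  intro i j
  calc ‖(X * Y) i j‖ = ‖∑ k, X i k * Y k j‖ := by rw [Matrix.mul_apply]
    _ ≤ ∑ k, ‖X i k * Y k j‖ := norm_sum_le _ _
    _ ≤ ∑ _k : Fin b, ‖X‖ * ‖Y‖ := by
        refine Finset.sum_le_sum fun k _ => ?_
        rw [norm_mul]
        exact mul_le_mul (Matrix.norm_entry_le_entrywise_sup_norm X)
          (Matrix.norm_entry_le_entrywise_sup_norm Y) (norm_nonneg _) (norm_nonneg _)
    _ = (b : ℝ) * ‖X‖ * ‖Y‖ := by
        simp [Finset.sum_const, Finset.card_univ, mul_assoc]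

theorem matrix_mul_isBoundedBilinearMap {a b c : ℕ} :
    IsBoundedBilinearMap ℝ (fun p : (Matrix (Fin a) (Fin b) ℝ) × (Matrix (Fin b) (Fin c) ℝ) =>
      p.1 * p.2) where
  add_left := fun X₁ X₂ Y => Matrix.add_mul X₁ X₂ Y
  smul_left := fun r X Y => Matrix.smul_mul r X Y
  add_right := fun X Y₁ Y₂ => Matrix.mul_add X Y₁ Y₂
  smul_right := fun r X Y => Matrix.mul_smul X r Y
  bound := ⟨(b : ℝ) + 1, by positivity, fun X Y => by
    have h := matrix_sup_norm_mul_le X Y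
    nlinarith [norm_nonneg X, norm_nonneg Y, mul_nonneg (norm_nonneg X) (norm_nonneg Y)]⟩

theorem HasDerivAt.matmul {a b c : ℕ} {f : ℝ → Matrix (Fin a) (Fin b) ℝ}
    {g : ℝ → Matrix (Fin b) (Fin c) ℝ} {f' g'} {t : ℝ}
    (hf : HasDerivAt f f' t) (hg : HasDerivAt g g' t) :
    HasDerivAt (fun s => f s * g s) (f' * g t + f t * g') t := by
  have h := (matrix_mul_isBoundedBilinearMap.hasFDerivAt (f t, g t)).comp_hasDerivAt t
    (hf.prodMk hg)
  have h2 : (matrix_mul_isBoundedBilinearMap.deriv (f t, g t)) (f', g')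
      = f t * g' + f' * g t := IsBoundedBilinearMap.deriv_apply _ _ _
  rw [h2] at h
  exact h.congr_deriv (add_comm _ _)

/-- The controllability Gramian `W_C = ∫₀^∞ exp(tA) B Bᵀ exp(tAᵀ) dt` is well
defined and solves the Lyapunov equation `A W_C + W_C Aᵀ = -B Bᵀ`. -/
theorem controllabilityGramian_solves_lyapunov {N M : ℕ}
    (A : Matrix (Fin N) (Fin N) ℝ) (B : Matrix (Fin N) (Fin M) ℝ)
    (hA : IsHurwitz A) :
    @IntegrableOn _ _ _ _ SeminormedAddGroup.toContinuousENorm (fun t : ℝ => exp (t • A) * B * Bᵀ * exp (t • Aᵀ))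
        (Set.Ioi (0 : ℝ)) volume ∧
      A * (∫ t in Set.Ioi (0 : ℝ), exp (t • A) * B * Bᵀ * exp (t • Aᵀ)) +
          (∫ t in Set.Ioi (0 : ℝ), exp (t • A) * B * Bᵀ * exp (t • Aᵀ)) * Aᵀ =
        -(B * Bᵀ) := by
  letI : ContinuousENorm (Matrix (Fin N) (Fin N) ℝ) := SeminormedAddGroup.toContinuousENorm
  haveI : TopologicalSpace.PseudoMetrizableSpace (Matrix (Fin N) (Fin N) ℝ) :=
    TopologicalSpace.pseudoMetrizableSpace_pi
  obtain ⟨ε, hε, C, hC, hb⟩ := aux_decay A hA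
  set F : ℝ → Matrix (Fin N) (Fin N) ℝ :=
    fun t => exp (t • A) * B * Bᵀ * exp (t • Aᵀ) with hFdef
  have hG : ∀ t : ℝ, HasDerivAt (fun s : ℝ => exp (s • A)) (A * exp (t • A)) t :=
    fun t => hasDerivAt_iff_tendsto_slope.mpr (aux_slope A t)
  have hH : ∀ t : ℝ, HasDerivAt (fun s : ℝ => exp (s • Aᵀ)) (Aᵀ * exp (t • Aᵀ)) t :=
    fun t => hasDerivAt_iff_tendsto_slope.mpr (aux_slope Aᵀ t)
  have hF' : ∀ t : ℝ, HasDerivAt F (A * F t + F t * Aᵀ) t := by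
    intro t
    have h1 := (((hG t).matmul (hasDerivAt_const t B)).matmul
      (hasDerivAt_const t Bᵀ)).matmul (hH t)
    simp only [Matrix.mul_zero, Matrix.zero_mul, add_zero] at h1
    convert h1 using 1
    rw [aux_comm Aᵀ t, hFdef]
    simp only [Matrix.mul_assoc]
  have hGb : ∀ t : ℝ, 0 ≤ t → ‖exp (t • A)‖ ≤ C * Real.exp (-(ε * t)) := by
    intro t ht
    rw [Matrix.norm_le_iff (by positivity)]
    intro i j
    rw [Real.norm_eq_abs]
    exact hb t ht i j
  have hHb : ∀ t : ℝ, 0 ≤ t → ‖exp (t • Aᵀ)‖ ≤ C * Real.exp (-(ε * t)) := by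
    intro t ht
    have htr : exp (t • Aᵀ) = (exp (t • A))ᵀ := by
      rw [← Matrix.transpose_smul, Matrix.exp_transpose]
    rw [Matrix.norm_le_iff (by positivity)]
    intro i j
    rw [htr, Matrix.transpose_apply, Real.norm_eq_abs]
    exact hb t ht j i
  set K : ℝ := (N : ℝ) * ((M : ℝ) * ((N : ℝ) * C * ‖B‖) * ‖Bᵀ‖) * C with hKdef
  have hK0 : 0 ≤ K := by positivity
  have hFb : ∀ t : ℝ, 0 ≤ t → ‖F t‖ ≤ K * Real.exp (-(ε * t)) := by
    intro t ht
    have he0 : (0:ℝ) < Real.exp (-(ε * t)) := Real.exp_pos _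
    have he1 : Real.exp (-(ε * t)) ≤ 1 := by
      rw [← Real.exp_zero]
      exact Real.exp_le_exp.mpr (by nlinarith)
    have hGb' := hGb t ht
    have hHb' := hHb t ht
    calc ‖F t‖ ≤ (N : ℝ) * ‖exp (t • A) * B * Bᵀ‖ * ‖exp (t • Aᵀ)‖ :=
          matrix_sup_norm_mul_le _ _
      _ ≤ (N : ℝ) * ((M : ℝ) * ‖exp (t • A) * B‖ * ‖Bᵀ‖) * ‖exp (t • Aᵀ)‖ := by
          gcongr
          exact matrix_sup_norm_mul_le _ _
      _ ≤ (N : ℝ) * ((M : ℝ) * ((N : ℝ) * ‖exp (t • A)‖ * ‖B‖) * ‖Bᵀ‖) * ‖exp (t • Aᵀ)‖ := by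
          gcongr
          exact matrix_sup_norm_mul_le _ _
      _ ≤ (N : ℝ) * ((M : ℝ) * ((N : ℝ) * (C * Real.exp (-(ε * t))) * ‖B‖) * ‖Bᵀ‖)
            * (C * Real.exp (-(ε * t))) := by
          gcongr
      _ = K * (Real.exp (-(ε * t)) * Real.exp (-(ε * t))) := by rw [hKdef]; ring
      _ ≤ K * Real.exp (-(ε * t)) := by
          refine mul_le_mul_of_nonneg_left ?_ hK0
          nlinarith
  have hFcont : Continuous F := continuous_iff_continuousAt.mpr fun t => (hF' t).continuousAt
  have hgint : IntegrableOn (fun t : ℝ => K * Real.exp (-(ε * t))) (Set.Ioi (0:ℝ)) volume := by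
    have h := (exp_neg_integrableOn_Ioi 0 hε).const_mul K
    simpa [neg_mul, IntegrableOn] using h
  have hFint : IntegrableOn F (Set.Ioi (0:ℝ)) volume := by
    refine Integrable.mono' hgint hFcont.aestronglyMeasurable ?_
    exact (ae_restrict_iff' measurableSet_Ioi).mpr
      (Filter.Eventually.of_forall fun t ht => hFb t (le_of_lt ht))
  let L1 : Matrix (Fin N) (Fin N) ℝ →L[ℝ] Matrix (Fin N) (Fin N) ℝ :=
    LinearMap.toContinuousLinearMap (LinearMap.mulLeft ℝ A)
  let L2 : Matrix (Fin N) (Fin N) ℝ →L[ℝ] Matrix (Fin N) (Fin N) ℝ :=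
    LinearMap.toContinuousLinearMap (LinearMap.mulRight ℝ Aᵀ)
  have hL1 : ∀ X, L1 X = A * X := fun X => rfl
  have hL2 : ∀ X, L2 X = X * Aᵀ := fun X => rfl
  have hint1 : IntegrableOn (fun t : ℝ => A * F t) (Set.Ioi (0:ℝ)) volume := by
    exact L1.integrable_comp hFint
  have hint2 : IntegrableOn (fun t : ℝ => F t * Aᵀ) (Set.Ioi (0:ℝ)) volume := by
    exact L2.integrable_comp hFint
  have htend : Filter.Tendsto F Filter.atTop (nhds 0) := by
    apply squeeze_zero_norm' ((Filter.eventually_ge_atTop (0:ℝ)).mono fun t ht => hFb t ht)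
    have h1 : Filter.Tendsto (fun t : ℝ => -(ε * t)) Filter.atTop Filter.atBot :=
      tendsto_neg_atTop_atBot.comp (Filter.Tendsto.const_mul_atTop hε tendsto_id)
    have h2 := (Real.tendsto_exp_atBot.comp h1).const_mul K
    simpa using h2
  have hFTC : ∫ t in Set.Ioi (0:ℝ), (A * F t + F t * Aᵀ) = 0 - F 0 :=
    integral_Ioi_of_hasDerivAt_of_tendsto' (fun x _ => hF' x) (hint1.add hint2) htend
  have hF0 : F 0 = B * Bᵀ := by
    rw [hFdef]
    simp [zero_smul, exp_zero, Matrix.one_mul, Matrix.mul_one]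
  refine ⟨hFint, ?_⟩
  have hA1 : A * (∫ t in Set.Ioi (0:ℝ), F t) = ∫ t in Set.Ioi (0:ℝ), A * F t := by
    rw [← hL1]; erw [← ContinuousLinearMap.integral_comp_comm L1 hFint]
    rfl
  have hA2 : (∫ t in Set.Ioi (0:ℝ), F t) * Aᵀ = ∫ t in Set.Ioi (0:ℝ), F t * Aᵀ := by
    rw [← hL2]; erw [← ContinuousLinearMap.integral_comp_comm L2 hFint]
    rfl
  rw [hA1, hA2, ← integral_add hint1 hint2, hFTC, hF0, zero_sub]
end

section
/- Let A ∈ ℝ^{N×N} be Hurwitz and B ∈ ℝ^{N×M}. If X ∈ ℝ^{N×N} satisfies the Lyapunov equation A·X + X·Aᵀ = −B·Bᵀ, then X equals the controllability Gramian W_C = ∫₀^∞ exp(tA) B Bᵀ exp(tAᵀ) dt; consequently X is symmetric and positive semi-definite. -/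
namespace HurwitzAux
open Matrix NormedSpace
variable {n : ℕ}

lemma exp_mulVec_tsum (M : Matrix (Fin n) (Fin n) ℂ) (v : Fin n → ℂ) :
    exp M *ᵥ v = ∑' k : ℕ, ((Nat.factorial k : ℝ))⁻¹ • (M ^ k *ᵥ v) := by
  letI : NormedRing (Matrix (Fin n) (Fin n) ℂ) := Matrix.linftyOpNormedRing
  letI : NormedAlgebra ℝ (Matrix (Fin n) (Fin n) ℂ) := Matrix.linftyOpNormedAlgebra
  let L : Matrix (Fin n) (Fin n) ℂ →ₗ[ℝ] (Fin n → ℂ) :=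
    { toFun := (· *ᵥ v)
      map_add' := fun x y => Matrix.add_mulVec x y v
      map_smul' := fun c x => Matrix.smul_mulVec c x v }
  let Lc : Matrix (Fin n) (Fin n) ℂ →L[ℝ] (Fin n → ℂ) := LinearMap.toContinuousLinearMap L
  have h1 : exp M *ᵥ v = Lc (exp M) := rfl
  rw [h1, exp_eq_tsum ℝ, Lc.map_tsum (expSeries_summable' (𝕂 := ℝ) M)]
  refine tsum_congr fun k => ?_
  show Lc (((Nat.factorial k : ℝ))⁻¹ • M ^ k) = _
  rw [_root_.map_smul]
  rfl

lemma exp_coe_smul_one (z : ℂ) :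
    exp (z • (1 : Matrix (Fin n) (Fin n) ℂ)) = Complex.exp z • 1 := by
  letI : NormedRing (Matrix (Fin n) (Fin n) ℂ) := Matrix.linftyOpNormedRing
  letI : NormedAlgebra ℝ (Matrix (Fin n) (Fin n) ℂ) := Matrix.linftyOpNormedAlgebra
  letI : NormedAlgebra ℂ (Matrix (Fin n) (Fin n) ℂ) := Matrix.linftyOpNormedAlgebra
  have h0 : (exp : Matrix (Fin n) (Fin n) ℂ → _) = exp := rfl
  have h1 : z • (1 : Matrix (Fin n) (Fin n) ℂ) = algebraMap ℂ _ z :=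
    (Algebra.algebraMap_eq_smul_one z).symm
  rw [h0, h1, ← Algebra.algebraMap_eq_smul_one, Complex.exp_eq_exp_ℂ]
  exact (map_exp (algebraMap ℂ (Matrix (Fin n) (Fin n) ℂ)) (continuous_algebraMap _ _) z).symm

lemma exp_mulVec_genEig (A : Matrix (Fin n) (Fin n) ℂ) (μ : ℂ) (K : ℕ) (v : Fin n → ℂ)
    (hv : ((A - μ • 1) ^ K) *ᵥ v = 0) (t : ℝ) :
    exp (t • A) *ᵥ v = ∑ k ∈ Finset.range K,
      (Complex.exp ((t : ℂ) * μ) * ((t : ℂ) ^ k / (Nat.factorial k : ℂ))) •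
        (((A - μ • 1) ^ k) *ᵥ v) := by
  have hsplit : t • A = ((t : ℂ) * μ) • (1 : Matrix (Fin n) (Fin n) ℂ) + t • (A - μ • 1) := by
    ext i j
    simp only [Matrix.add_apply, Matrix.smul_apply, Matrix.sub_apply, Matrix.one_apply,
      smul_eq_mul, Complex.real_smul]
    split_ifs <;> ring
  have hcomm : Commute (((t : ℂ) * μ) • (1 : Matrix (Fin n) (Fin n) ℂ)) (t • (A - μ • 1)) := by
    unfold Commute SemiconjBy
    simp only [smul_mul_assoc, mul_smul_comm, one_mul, mul_one]
    rw [smul_comm]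
  have hzero : ∀ k, K ≤ k → (A - μ • 1) ^ k *ᵥ v = 0 := by
    intro k hk
    rw [← Nat.sub_add_cancel hk, pow_add, ← Matrix.mulVec_mulVec, hv, Matrix.mulVec_zero]
  rw [hsplit, Matrix.exp_add_of_commute _ _ hcomm, exp_coe_smul_one]
  rw [Matrix.smul_mul, Matrix.one_mul, Matrix.smul_mulVec]
  rw [exp_mulVec_tsum]
  have hvanish : ∀ k ∉ Finset.range K,
      ((Nat.factorial k : ℝ))⁻¹ • ((t • (A - μ • 1)) ^ k *ᵥ v) = 0 := by
    intro k hk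
    rw [Finset.mem_range, not_lt] at hk
    rw [smul_pow, Matrix.smul_mulVec, hzero k hk, smul_zero, smul_zero]
  rw [tsum_eq_sum hvanish, Finset.smul_sum]
  refine Finset.sum_congr rfl fun k hk => ?_
  rw [smul_pow, Matrix.smul_mulVec, smul_smul]
  ext i
  simp only [Pi.smul_apply, Complex.real_smul, smul_eq_mul]
  push_cast
  ring

lemma poly_exp_bound (k : ℕ) {ε : ℝ} (hε : 0 < ε) :
    ∃ c, 0 ≤ c ∧ ∀ t ≥ (0:ℝ), t ^ k * Real.exp (-(2*ε) * t) ≤ c * Real.exp (-ε * t) := by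
  refine ⟨(Nat.factorial k : ℝ) / ε ^ k, by positivity, fun t ht => ?_⟩
  have h1 : (ε * t) ^ k / (Nat.factorial k : ℝ) ≤ Real.exp (ε * t) :=
    Real.pow_div_factorial_le_exp _ (by positivity) k
  have h2 : t ^ k ≤ (Nat.factorial k : ℝ) / ε ^ k * Real.exp (ε * t) := by
    rw [mul_pow] at h1
    have hf : (0:ℝ) < (Nat.factorial k : ℝ) := by positivity
    have hek : (0:ℝ) < ε ^ k := by positivity
    rw [div_le_iff₀ hf] at h1
    rw [div_mul_eq_mul_div, le_div_iff₀ hek]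
    nlinarith [Real.exp_pos (ε * t)]
  have h3 : Real.exp (ε * t) * Real.exp (-(2*ε) * t) = Real.exp (-ε * t) := by
    rw [← Real.exp_add]; ring_nf
  calc t ^ k * Real.exp (-(2*ε) * t)
      ≤ ((Nat.factorial k : ℝ) / ε ^ k * Real.exp (ε * t)) * Real.exp (-(2*ε) * t) := by
        exact mul_le_mul_of_nonneg_right h2 (Real.exp_pos _).le
    _ = (Nat.factorial k : ℝ) / ε ^ k * Real.exp (-ε * t) := by rw [mul_assoc, h3]

lemma exp_mulVec_decay (A : Matrix (Fin n) (Fin n) ℂ)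
    (hA : ∀ μ ∈ spectrum ℂ A, μ.re < 0) :
    ∃ ε > 0, ∀ v : Fin n → ℂ, ∃ C, 0 ≤ C ∧ ∀ t ≥ (0:ℝ),
      ‖exp (t • A) *ᵥ v‖ ≤ C * Real.exp (-ε * t) := by
  obtain ⟨ε, hε, hspec⟩ : ∃ ε > 0, ∀ μ ∈ spectrum ℂ A, μ.re ≤ -(2*ε) := by
    by_cases hne : (spectrum ℂ A).Nonempty
    · set s := (Matrix.finite_spectrum A).toFinset.image Complex.re with hs
      have hsne : s.Nonempty :=
        Finset.image_nonempty.2 ((Matrix.finite_spectrum A).toFinset_nonempty.2 hne)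
      have hmax : s.max' hsne < 0 := by
        obtain ⟨μ, hμ, hre⟩ := Finset.mem_image.1 (s.max'_mem hsne)
        rw [← hre]; exact hA μ ((Matrix.finite_spectrum A).mem_toFinset.1 hμ)
      refine ⟨-(s.max' hsne)/2, by linarith, fun μ hμ => ?_⟩
      have : μ.re ≤ s.max' hsne :=
        Finset.le_max' s _
          (Finset.mem_image.2 ⟨μ, (Matrix.finite_spectrum A).mem_toFinset.2 hμ, rfl⟩)
      linarith
    · exact ⟨1, one_pos, fun μ hμ => absurd ⟨μ, hμ⟩ hne⟩
  refine ⟨ε, hε, ?_⟩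
  set f := Matrix.toLinAlgEquiv' A with hf
  set S : Submodule ℂ (Fin n → ℂ) :=
    { carrier := {v | ∃ C, 0 ≤ C ∧ ∀ t ≥ (0:ℝ), ‖exp (t • A) *ᵥ v‖ ≤ C * Real.exp (-ε * t)}
      add_mem' := by
        rintro u v ⟨C1, hC1, h1⟩ ⟨C2, hC2, h2⟩
        refine ⟨C1 + C2, by linarith, fun t ht => ?_⟩
        rw [Matrix.mulVec_add, add_mul]
        exact (norm_add_le _ _).trans (add_le_add (h1 t ht) (h2 t ht))
      zero_mem' := ⟨0, le_refl 0, fun t ht => by simp [Matrix.mulVec_zero]⟩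
      smul_mem' := by
        rintro c v ⟨C, hC, h⟩
        refine ⟨‖c‖ * C, by positivity, fun t ht => ?_⟩
        rw [Matrix.mulVec_smul, norm_smul, mul_assoc]
        exact mul_le_mul_of_nonneg_left (h t ht) (norm_nonneg c) } with hS
  suffices htop : ⊤ ≤ S from fun v => htop Submodule.mem_top
  rw [← Module.End.iSup_maxGenEigenspace_eq_top f]
  refine iSup_le fun μ => fun v hv => ?_
  rw [Module.End.mem_maxGenEigenspace] at hv
  obtain ⟨K, hK⟩ := hv
  have hmv : ((A - μ • 1) ^ K) *ᵥ v = 0 := by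
    have h2 : (Matrix.toLinAlgEquiv' ((A - μ • 1) ^ K)) v = 0 := by
      rw [map_pow, map_sub, _root_.map_smul, _root_.map_one]
      exact hK
    rwa [Matrix.toLinAlgEquiv'_apply] at h2
  rcases eq_or_ne v 0 with rfl | hvne
  · exact S.zero_mem
  have hμspec : μ ∈ spectrum ℂ A := by
    rw [← AlgEquiv.spectrum_eq Matrix.toLinAlgEquiv' A]
    rw [← Module.End.hasEigenvalue_iff_mem_spectrum]
    refine Module.End.hasEigenvalue_of_hasGenEigenvalue (k := K) ?_
    exact (Submodule.ne_bot_iff _).mpr ⟨v, Module.End.mem_genEigenspace_nat.2 hK, hvne⟩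
  have hre : μ.re ≤ -(2*ε) := hspec μ hμspec
  choose c hc0 hcb using fun k : ℕ => poly_exp_bound k hε
  set w : ℕ → (Fin n → ℂ) := fun k => ((A - μ • 1) ^ k) *ᵥ v with hw
  refine ⟨∑ k ∈ Finset.range K, c k * ‖w k‖ / (Nat.factorial k : ℝ), ?_, fun t ht => ?_⟩
  · exact Finset.sum_nonneg fun k _ =>
      div_nonneg (mul_nonneg (hc0 k) (norm_nonneg _)) (Nat.cast_nonneg _)
  rw [exp_mulVec_genEig A μ K v hmv t, Finset.sum_mul]
  refine (norm_sum_le _ _).trans (Finset.sum_le_sum fun k _ => ?_)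
  rw [norm_smul, norm_mul]
  have he1 : ‖Complex.exp ((t:ℂ) * μ)‖ = Real.exp (t * μ.re) := by
    rw [Complex.norm_exp]
    congr 1
    simp [Complex.mul_re]
  have he2 : ‖((t:ℂ) ^ k / (Nat.factorial k : ℂ))‖ = t ^ k / (Nat.factorial k : ℝ) := by
    rw [norm_div, norm_pow]
    simp [Complex.norm_real, abs_of_nonneg ht]
  rw [he1, he2]
  have hb1 : Real.exp (t * μ.re) ≤ Real.exp (-(2*ε) * t) := by
    apply Real.exp_le_exp.2
    calc t * μ.re ≤ t * (-(2*ε)) := mul_le_mul_of_nonneg_left hre ht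
      _ = -(2*ε) * t := by ring
  have hb2 : t ^ k * Real.exp (-(2*ε) * t) ≤ c k * Real.exp (-ε * t) := hcb k t ht
  have hwn : (0:ℝ) ≤ ‖w k‖ := norm_nonneg _
  have hfk : (0:ℝ) < (Nat.factorial k : ℝ) := by positivity
  calc Real.exp (t * μ.re) * (t ^ k / (Nat.factorial k : ℝ)) * ‖w k‖
      ≤ Real.exp (-(2*ε) * t) * (t ^ k / (Nat.factorial k : ℝ)) * ‖w k‖ := by
        have ht2 : 0 ≤ t ^ k / (Nat.factorial k : ℝ) := by positivity
        exact mul_le_mul_of_nonneg_right (mul_le_mul_of_nonneg_right hb1 ht2) hwn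
    _ = (t ^ k * Real.exp (-(2*ε) * t)) * ‖w k‖ / (Nat.factorial k : ℝ) := by ring
    _ ≤ (c k * Real.exp (-ε * t)) * ‖w k‖ / (Nat.factorial k : ℝ) := by gcongr
    _ = c k * ‖w k‖ / (Nat.factorial k : ℝ) * Real.exp (-ε * t) := by ring

lemma exp_entry_decay_complex (A : Matrix (Fin n) (Fin n) ℂ)
    (hA : ∀ μ ∈ spectrum ℂ A, μ.re < 0) :
    ∃ ε > 0, ∃ C, 0 ≤ C ∧ ∀ t ≥ (0:ℝ), ∀ i j,
      ‖exp (t • A) i j‖ ≤ C * Real.exp (-ε * t) := by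
  obtain ⟨ε, hε, h⟩ := exp_mulVec_decay A hA
  choose C hC0 hCb using fun j : Fin n => h (Pi.single j 1)
  refine ⟨ε, hε, ∑ j, C j, Finset.sum_nonneg fun j _ => hC0 j, fun t ht i j => ?_⟩
  have h1 : exp (t • A) i j = (exp (t • A) *ᵥ Pi.single j 1) i := by
    simp [Matrix.mulVec_single]
  rw [h1]
  calc ‖(exp (t • A) *ᵥ Pi.single j 1) i‖
      ≤ ‖exp (t • A) *ᵥ Pi.single j 1‖ := norm_le_pi_norm _ i
    _ ≤ C j * Real.exp (-ε * t) := hCb j t ht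
    _ ≤ (∑ j', C j') * Real.exp (-ε * t) := by
        apply mul_le_mul_of_nonneg_right ?_ (Real.exp_pos _).le
        exact Finset.single_le_sum (fun j' _ => hC0 j') (Finset.mem_univ j)

lemma map_exp_ofReal (M : Matrix (Fin n) (Fin n) ℝ) :
    (exp M).map Complex.ofReal = exp (M.map Complex.ofReal) := by
  letI : NormedRing (Matrix (Fin n) (Fin n) ℝ) := Matrix.linftyOpNormedRing
  letI : NormedAlgebra ℝ (Matrix (Fin n) (Fin n) ℝ) := Matrix.linftyOpNormedAlgebra
  letI : NormedRing (Matrix (Fin n) (Fin n) ℂ) := Matrix.linftyOpNormedRing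
  letI : NormedAlgebra ℝ (Matrix (Fin n) (Fin n) ℂ) := Matrix.linftyOpNormedAlgebra
  letI : NormedAlgebra ℚ (Matrix (Fin n) (Fin n) ℝ) := Matrix.linftyOpNormedAlgebra
  letI : NormedAlgebra ℚ (Matrix (Fin n) (Fin n) ℂ) := Matrix.linftyOpNormedAlgebra
  have hc : Continuous (Complex.ofRealHom.mapMatrix :
      Matrix (Fin n) (Fin n) ℝ →+* Matrix (Fin n) (Fin n) ℂ) := by
    apply continuous_matrix
    intro i j
    exact Complex.continuous_ofReal.comp ((continuous_apply j).comp (continuous_apply i))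
  exact map_exp Complex.ofRealHom.mapMatrix hc M

lemma exp_entry_decay_real (A : Matrix (Fin n) (Fin n) ℝ)
    (hA : ∀ μ ∈ spectrum ℂ (A.map Complex.ofReal), μ.re < 0) :
    ∃ ε > 0, ∃ C, 0 ≤ C ∧ ∀ t ≥ (0:ℝ), ∀ i j,
      |exp (t • A) i j| ≤ C * Real.exp (-ε * t) := by
  obtain ⟨ε, hε, C, hC0, h⟩ := exp_entry_decay_complex (A.map Complex.ofReal) hA
  refine ⟨ε, hε, C, hC0, fun t ht i j => ?_⟩
  have h1 : ((t • A).map Complex.ofReal) = t • A.map Complex.ofReal := by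
    ext i j
    simp [Complex.real_smul]
  have h2 : (Complex.ofReal (exp (t • A) i j)) = exp (t • A.map Complex.ofReal) i j := by
    rw [← h1, ← map_exp_ofReal]
    rfl
  have h3 := h t ht i j
  rwa [← h2, Complex.norm_real, Real.norm_eq_abs] at h3

lemma hasDerivAt_exp_entry (A : Matrix (Fin n) (Fin n) ℝ) (t : ℝ) (i j : Fin n) :
    HasDerivAt (fun s : ℝ => exp (s • A) i j) ((A * exp (t • A)) i j) t := by
  letI : NormedRing (Matrix (Fin n) (Fin n) ℝ) := Matrix.linftyOpNormedRing
  letI : NormedAlgebra ℝ (Matrix (Fin n) (Fin n) ℝ) := Matrix.linftyOpNormedAlgebra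
  have h := hasDerivAt_exp_smul_const' A t
  let L : Matrix (Fin n) (Fin n) ℝ →ₗ[ℝ] ℝ :=
    { toFun := fun M => M i j, map_add' := fun _ _ => rfl, map_smul' := fun _ _ => rfl }
  exact (LinearMap.toContinuousLinearMap L).hasFDerivAt.comp_hasDerivAt t h

lemma commute_exp (A : Matrix (Fin n) (Fin n) ℝ) (t : ℝ) :
    A * exp (t • A) = exp (t • A) * A := by
  letI : NormedRing (Matrix (Fin n) (Fin n) ℝ) := Matrix.linftyOpNormedRing
  letI : NormedAlgebra ℝ (Matrix (Fin n) (Fin n) ℝ) := Matrix.linftyOpNormedAlgebra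
  exact ((Commute.refl A).smul_right t).exp_right

end HurwitzAux

open MeasureTheory Matrix NormedSpace

attribute [local instance] Matrix.normedAddCommGroup Matrix.normedSpace

section MainAux
open HurwitzAux

lemma hasDerivAt_exp_matrix {N : ℕ} (A : Matrix (Fin N) (Fin N) ℝ) (t : ℝ) :
    HasDerivAt (fun s : ℝ => exp (s • A)) (A * exp (t • A)) t :=
  hasDerivAt_pi.2 fun i => hasDerivAt_pi.2 fun j => hasDerivAt_exp_entry A t i j

lemma hasDerivAt_matrix_mul {P Q R : ℕ} {u : ℝ → Matrix (Fin P) (Fin Q) ℝ}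
    {v : ℝ → Matrix (Fin Q) (Fin R) ℝ} {u' : Matrix (Fin P) (Fin Q) ℝ}
    {v' : Matrix (Fin Q) (Fin R) ℝ} {t : ℝ}
    (hu : HasDerivAt u u' t) (hv : HasDerivAt v v' t) :
    HasDerivAt (fun s => u s * v s) (u' * v t + u t * v') t := by
  refine hasDerivAt_pi.2 fun i => hasDerivAt_pi.2 fun j => ?_
  have h : ∀ k : Fin Q, HasDerivAt (fun s => u s i k * v s k j)
      (u' i k * v t k j + u t i k * v' k j) t := fun k =>
    (hasDerivAt_pi.1 (hasDerivAt_pi.1 hu i) k).mul (hasDerivAt_pi.1 (hasDerivAt_pi.1 hv k) j)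
  have hsum := HasDerivAt.fun_sum (fun k (_ : k ∈ Finset.univ) => h k)
  simp only [Matrix.mul_apply, Matrix.add_apply]
  convert hsum using 1
  rw [← Finset.sum_add_distrib]

lemma entry_mul_le {P Q R : ℕ} (M : Matrix (Fin P) (Fin Q) ℝ) (Nm : Matrix (Fin Q) (Fin R) ℝ)
    {a b : ℝ} (ha : ∀ i j, |M i j| ≤ a) (hb : ∀ i j, |Nm i j| ≤ b) (i : Fin P) (j : Fin R) :
    |(M * Nm) i j| ≤ Q * a * b := by
  calc |(M * Nm) i j| = |∑ k, M i k * Nm k j| := by rw [Matrix.mul_apply]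
    _ ≤ ∑ k, |M i k * Nm k j| := Finset.abs_sum_le_sum_abs _ _
    _ ≤ ∑ _k : Fin Q, a * b := Finset.sum_le_sum fun k _ => by
        rw [abs_mul]
        exact mul_le_mul (ha i k) (hb k j) (abs_nonneg _) ((abs_nonneg _).trans (ha i k))
    _ = Q * a * b := by
        rw [Finset.sum_const, Finset.card_univ, Fintype.card_fin, nsmul_eq_mul, mul_assoc]

end MainAux

/-- For Hurwitz `A`, any solution `X` of the Lyapunov equation `A X + X Aᵀ = -B Bᵀ`
equals the controllability Gramian `∫₀^∞ exp(tA) B Bᵀ exp(tAᵀ) dt`; consequently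
`X` is symmetric positive semi-definite. -/
theorem lyapunov_solution_eq_controllabilityGramian {N M : ℕ}
    (A : Matrix (Fin N) (Fin N) ℝ) (B : Matrix (Fin N) (Fin M) ℝ)
    (hA : IsHurwitz A)
    (X : Matrix (Fin N) (Fin N) ℝ) (hX : A * X + X * Aᵀ = -(B * Bᵀ)) :
    X = (∫ t in Set.Ioi (0 : ℝ), NormedSpace.exp (t • A) * B * Bᵀ * NormedSpace.exp (t • Aᵀ)) ∧
      X.PosSemidef := by
  classical
  obtain ⟨ε, hε, C, hC0, hdecay⟩ := HurwitzAux.exp_entry_decay_real A hA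
  have h2ε : (0:ℝ) < 2 * ε := by linarith
  have htrans : ∀ t : ℝ, exp (t • Aᵀ) = (exp (t • A))ᵀ := fun t => by
    rw [← Matrix.transpose_smul, Matrix.exp_transpose]
  have hdecayT : ∀ t ≥ (0:ℝ), ∀ (i j : Fin N),
      |exp (t • Aᵀ) i j| ≤ C * Real.exp (-ε * t) := by
    intro t ht i j
    rw [htrans]
    exact hdecay t ht j i
  set g : ℝ → Matrix (Fin N) (Fin N) ℝ :=
    fun t => exp (t • A) * B * Bᵀ * exp (t • Aᵀ) with hg
  have hexpCont : ∀ {P : ℕ} (Y : Matrix (Fin P) (Fin P) ℝ),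
      Continuous fun t : ℝ => exp (t • Y) := fun Y =>
    continuous_iff_continuousAt.2 fun t => (hasDerivAt_exp_matrix Y t).continuousAt
  have hgCont : Continuous g :=
    (((hexpCont A).matrix_mul continuous_const).matrix_mul continuous_const).matrix_mul
      (hexpCont Aᵀ)
  have hBbd : ∀ (i : Fin N) (j : Fin M), |B i j| ≤ ‖B‖ := fun i j =>
    Matrix.norm_entry_le_entrywise_sup_norm B
  have hBtbd : ∀ (i : Fin M) (j : Fin N), |Bᵀ i j| ≤ ‖B‖ := fun i j =>
    Matrix.norm_entry_le_entrywise_sup_norm B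
  set D : ℝ := (M:ℝ) * ((N:ℝ) * (C * ‖B‖)) * ((N:ℝ) * (‖B‖ * C)) with hD
  have hD0 : 0 ≤ D := by
    have h1 := norm_nonneg B
    have h2 : (0:ℝ) ≤ (M:ℝ) := Nat.cast_nonneg _
    have h3 : (0:ℝ) ≤ (N:ℝ) := Nat.cast_nonneg _
    positivity
  have hgbd : ∀ t ≥ (0:ℝ), ‖g t‖ ≤ D * Real.exp (-(2*ε) * t) := by
    intro t ht
    rw [Matrix.norm_le_iff (mul_nonneg hD0 (Real.exp_pos _).le)]
    intro i j
    have h4 : g t = (exp (t • A) * B) * (Bᵀ * exp (t • Aᵀ)) := by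
      rw [hg]; simp only [Matrix.mul_assoc]
    have hb1 : ∀ (i' : Fin N) (j' : Fin M),
        |(exp (t • A) * B) i' j'| ≤ (N:ℝ) * (C * Real.exp (-ε * t)) * ‖B‖ :=
      fun i' j' => entry_mul_le _ _ (hdecay t ht) hBbd i' j'
    have hb2 : ∀ (i' : Fin M) (j' : Fin N),
        |(Bᵀ * exp (t • Aᵀ)) i' j'| ≤ (M:ℝ)⁻¹ * 0 + (N:ℝ) * ‖B‖ * (C * Real.exp (-ε * t)) := by
      intro i' j'
      have := entry_mul_le _ _ hBtbd (hdecayT t ht) i' j'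
      simpa using this
    have hmain := entry_mul_le _ _ hb1 (fun i' j' => by simpa using hb2 i' j') i j
    rw [Real.norm_eq_abs, h4]
    refine hmain.trans (le_of_eq ?_)
    have hee : Real.exp (-ε*t) * Real.exp (-ε*t) = Real.exp (-(2*ε)*t) := by
      rw [← Real.exp_add]; ring_nf
    rw [hD, ← hee]
    ring
  letI : ContinuousENorm (Matrix (Fin N) (Fin N) ℝ) := SeminormedAddGroup.toContinuousENorm
  letI : TopologicalSpace.PseudoMetrizableSpace (Matrix (Fin N) (Fin N) ℝ) :=
    inferInstanceAs (TopologicalSpace.PseudoMetrizableSpace (Fin N → Fin N → ℝ))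
  have hgint : IntegrableOn g (Set.Ioi (0:ℝ)) := by
    have hdom : IntegrableOn (fun t => D * Real.exp (-(2*ε) * t)) (Set.Ioi (0:ℝ)) :=
      (exp_neg_integrableOn_Ioi 0 h2ε).const_mul D
    refine Integrable.mono' hdom hgCont.aestronglyMeasurable ?_
    rw [ae_restrict_iff' measurableSet_Ioi]
    exact Filter.Eventually.of_forall fun t ht => hgbd t (le_of_lt ht)
  set F : ℝ → Matrix (Fin N) (Fin N) ℝ := fun t => exp (t • A) * X * exp (t • Aᵀ) with hF
  have hFder : ∀ t : ℝ, HasDerivAt F (-(g t)) t := by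
    intro t
    have h1 : HasDerivAt (fun s : ℝ => exp (s • A) * X)
        (A * exp (t • A) * X + exp (t • A) * 0) t :=
      hasDerivAt_matrix_mul (hasDerivAt_exp_matrix A t) (hasDerivAt_const t X)
    have h2 := hasDerivAt_matrix_mul h1 (hasDerivAt_exp_matrix Aᵀ t)
    have h3 : HasDerivAt F
        ((A * exp (t • A) * X + exp (t • A) * 0) * exp (t • Aᵀ) +
          exp (t • A) * X * (Aᵀ * exp (t • Aᵀ))) t := h2
    convert h3 using 1
    rw [Matrix.mul_zero, add_zero, HurwitzAux.commute_exp A t]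
    have key : exp (t•A) * A * X * exp (t•Aᵀ) + exp (t•A) * X * (Aᵀ * exp (t•Aᵀ))
        = exp (t•A) * (A*X + X*Aᵀ) * exp (t•Aᵀ) := by noncomm_ring
    rw [key, hX]
    show -(exp (t • A) * B * Bᵀ * exp (t • Aᵀ)) = _
    simp only [Matrix.neg_mul, Matrix.mul_neg, Matrix.mul_assoc, neg_inj]
  have hFcont : Continuous F := continuous_iff_continuousAt.2 fun t => (hFder t).continuousAt
  have hFtend : Filter.Tendsto F Filter.atTop (nhds 0) := by
    have hXbd : ∀ (i j : Fin N), |X i j| ≤ ‖X‖ := fun i j =>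
      Matrix.norm_entry_le_entrywise_sup_norm X
    set DF : ℝ := (N:ℝ) * ((N:ℝ) * (C * ‖X‖)) * C with hDF
    have hDF0 : 0 ≤ DF := by
      have h1 := norm_nonneg X
      have h3 : (0:ℝ) ≤ (N:ℝ) := Nat.cast_nonneg _
      positivity
    have hFbd : ∀ t ≥ (0:ℝ), ‖F t‖ ≤ DF * Real.exp (-(2*ε)*t) := by
      intro t ht
      rw [Matrix.norm_le_iff (mul_nonneg hDF0 (Real.exp_pos _).le)]
      intro i j
      have h4 : F t = (exp (t • A) * X) * exp (t • Aᵀ) := by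
        rw [hF]
      have hb1 : ∀ (i' j' : Fin N),
          |(exp (t • A) * X) i' j'| ≤ (N:ℝ) * (C * Real.exp (-ε * t)) * ‖X‖ :=
        fun i' j' => entry_mul_le _ _ (hdecay t ht) hXbd i' j'
      have hmain := entry_mul_le _ _ hb1 (hdecayT t ht) i j
      rw [Real.norm_eq_abs, h4]
      refine hmain.trans (le_of_eq ?_)
      have hee : Real.exp (-ε*t) * Real.exp (-ε*t) = Real.exp (-(2*ε)*t) := by
        rw [← Real.exp_add]; ring_nf
      rw [hDF, ← hee]
      ring
    refine squeeze_zero_norm' (a := fun t => DF * Real.exp (-(2*ε)*t)) ?_ ?_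
    · exact Filter.eventually_atTop.2 ⟨0, fun t ht => hFbd t ht⟩
    · have h1 : Filter.Tendsto (fun t:ℝ => 2*ε*t) Filter.atTop Filter.atTop :=
        Filter.Tendsto.const_mul_atTop h2ε Filter.tendsto_id
      have h2 := Real.tendsto_exp_neg_atTop_nhds_zero.comp h1
      have h3 := h2.const_mul DF
      simp only [mul_zero] at h3
      refine h3.congr fun t => ?_
      simp [Function.comp, neg_mul]
  have hF0 : F 0 = X := by
    rw [hF]
    simp [zero_smul, exp_zero]
  have hFTC := integral_Ioi_of_hasDerivAt_of_tendsto hFcont.continuousWithinAt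
    (fun x _ => hFder x) hgint.neg hFtend
  rw [integral_neg, hF0, zero_sub, neg_inj] at hFTC
  have hXeq : X = ∫ t in Set.Ioi (0:ℝ), g t := hFTC.symm
  have hgsym : ∀ t, g t = (exp (t•A) * B) * (exp (t•A) * B)ᵀ := by
    intro t
    show exp (t • A) * B * Bᵀ * exp (t • Aᵀ) = _
    rw [htrans t, Matrix.transpose_mul]
    simp only [Matrix.mul_assoc]
  refine ⟨hXeq, Matrix.PosSemidef.of_dotProduct_mulVec_nonneg ?_ ?_⟩
  · -- Hermitian
    rw [Matrix.IsHermitian, Matrix.conjTranspose_eq_transpose_of_trivial]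
    let Ltr : Matrix (Fin N) (Fin N) ℝ →ₗ[ℝ] Matrix (Fin N) (Fin N) ℝ :=
      { toFun := fun Mm => Mmᵀ
        map_add' := fun _ _ => Matrix.transpose_add _ _
        map_smul' := fun _ _ => Matrix.transpose_smul _ _ }
    have hL := ContinuousLinearMap.integral_comp_comm (LinearMap.toContinuousLinearMap Ltr) hgint
    calc Xᵀ = (∫ t in Set.Ioi (0:ℝ), g t)ᵀ := by rw [← hXeq]
      _ = ∫ t in Set.Ioi (0:ℝ), (g t)ᵀ := hL.symm
      _ = ∫ t in Set.Ioi (0:ℝ), g t := by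
          congr 1
          funext t
          rw [hgsym t, Matrix.transpose_mul, Matrix.transpose_transpose]
      _ = X := hXeq.symm
  · intro x
    rw [star_trivial]
    let Lq : Matrix (Fin N) (Fin N) ℝ →ₗ[ℝ] ℝ :=
      { toFun := fun Mm => x ⬝ᵥ (Mm *ᵥ x)
        map_add' := fun M1 M2 => by
          simp only [Matrix.add_mulVec, dotProduct_add]
        map_smul' := fun c M1 => by
          simp only [Matrix.smul_mulVec, dotProduct_smul, smul_eq_mul,
            RingHom.id_apply] }
    have hL := ContinuousLinearMap.integral_comp_comm (LinearMap.toContinuousLinearMap Lq) hgint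
    have hXq : x ⬝ᵥ (X *ᵥ x) = ∫ t in Set.Ioi (0:ℝ), x ⬝ᵥ (g t *ᵥ x) := by
      rw [hXeq]
      exact hL.symm
    rw [hXq]
    refine setIntegral_nonneg measurableSet_Ioi fun t ht => ?_
    rw [hgsym t, ← Matrix.mulVec_mulVec, Matrix.dotProduct_mulVec, Matrix.mulVec_transpose]
    exact Finset.sum_nonneg fun k _ => mul_self_nonneg _
end

section
/- Let (A, B, C) be a symmetric linear system: A ∈ ℝ^{N×N} Hurwitz, B ∈ ℝ^{N×M}, C ∈ ℝ^{M×N}, and there exists a symmetric invertible matrix P with P·A = Aᵀ·P and P·B = Cᵀ. Then the square of the cross Gramian equals the product of the controllability and observability Gramians: W_X·W_X = W_C·W_O. Consequently the multiset of complex eigenvalues (with algebraic multiplicity) of W_C·W_O equals the multiset of squares of the eigenvalues of W_X, so the Hankel singular values σ_i = √λ_i(W_C·W_O) satisfy σ_i = |λ_i(W_X)|. -/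
open MeasureTheory Matrix NormedSpace

attribute [local instance] Matrix.normedAddCommGroup Matrix.normedSpace

section auxCrossGramian

open Polynomial
open scoped ComplexOrder

variable {n : Type*} [Fintype n] [DecidableEq n]

lemma my_eval_charpoly {R : Type*} [CommRing R] (M : Matrix n n R) (x : R) :
    M.charpoly.eval x = (x • (1 : Matrix n n R) - M).det := by
  rw [Matrix.charpoly, ← Polynomial.coe_evalRingHom, RingHom.map_det]
  congr 1
  ext i j
  by_cases h : i = j
  · subst h
    simp [Matrix.charmatrix_apply_eq, Matrix.one_apply, Matrix.sub_apply, Matrix.smul_apply]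
  · simp [Matrix.charmatrix_apply_ne _ _ _ h, Matrix.one_apply_ne h, Matrix.sub_apply,
      Matrix.smul_apply, Matrix.one_apply]

lemma my_charpoly_mul_comm {K : Type*} [Field K] [Infinite K] (A B : Matrix n n K) :
    (A * B).charpoly = (B * A).charpoly := by
  apply Polynomial.funext
  intro x
  rw [my_eval_charpoly, my_eval_charpoly]
  rcases eq_or_ne x 0 with rfl | hx
  · simp [Matrix.det_neg, Matrix.det_mul, mul_comm]
  · have h1 : x • (1 : Matrix n n K) - A * B = x • ((1 : Matrix n n K) - (x⁻¹ • A) * B) := by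
      rw [smul_sub, smul_mul_assoc, smul_smul, mul_inv_cancel₀ hx, one_smul]
    have h2 : x • (1 : Matrix n n K) - B * A = x • ((1 : Matrix n n K) - B * (x⁻¹ • A)) := by
      rw [smul_sub, mul_smul_comm, smul_smul, mul_inv_cancel₀ hx, one_smul]
    rw [h1, h2, Matrix.det_smul, Matrix.det_smul, Matrix.det_one_sub_mul_comm]

lemma my_charpoly_sq_roots (M : Matrix n n ℂ) :
    (M * M).charpoly.roots = M.charpoly.roots.map (fun z => z ^ 2) := by
  have key : (M * M).charpoly
      = ((M.charpoly.roots.map (fun z : ℂ => z ^ 2)).map (fun a : ℂ => X - C a)).prod := by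
    apply Polynomial.funext
    intro x
    obtain ⟨s, hs⟩ := IsAlgClosed.exists_pow_nat_eq x (n := 2) (by norm_num)
    set p := M.charpoly with hp
    have hmonic : p.Monic := Matrix.charpoly_monic M
    have hsp : p.Splits := IsAlgClosed.splits p
    have hfac : x • (1 : Matrix n n ℂ) - M * M
        = (s • (1 : Matrix n n ℂ) - M) * (s • (1 : Matrix n n ℂ) + M) := by
      have e1 : (s • (1 : Matrix n n ℂ)) * (s • (1 : Matrix n n ℂ)) = x • 1 := by
        rw [smul_mul_assoc, mul_smul_comm, one_mul, smul_smul, ← pow_two, hs]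
      have e2 : (s • (1 : Matrix n n ℂ)) * M = s • M := by rw [smul_mul_assoc, one_mul]
      have e3 : M * (s • (1 : Matrix n n ℂ)) = s • M := by rw [mul_smul_comm, mul_one]
      rw [sub_mul, mul_add, mul_add, e1, e2, e3]
      abel
    have hneg : s • (1 : Matrix n n ℂ) + M = -((-s) • (1 : Matrix n n ℂ) - M) := by
      rw [neg_sub, neg_smul, sub_neg_eq_add, add_comm]
    have hcard : p.roots.card = Fintype.card n := by
      rw [Polynomial.splits_iff_card_roots.mp hsp, Matrix.charpoly_natDegree_eq_dim]
    have lhs : (M * M).charpoly.eval x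
        = (p.roots.map (fun a => s - a)).prod * ((-1 : ℂ) ^ Fintype.card n *
            (p.roots.map (fun a => -s - a)).prod) := by
      rw [my_eval_charpoly, hfac, Matrix.det_mul, hneg, Matrix.det_neg, ← my_eval_charpoly,
        ← my_eval_charpoly, ← hp]
      conv_lhs => rw [hsp.eq_prod_roots_of_monic hmonic]
      rw [Polynomial.eval_multiset_prod, Polynomial.eval_multiset_prod, Multiset.map_map,
        Multiset.map_map]
      simp [Function.comp]
    rw [lhs]
    have hnegprod : ((-1 : ℂ) ^ Fintype.card n * (p.roots.map (fun a => -s - a)).prod)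
        = (p.roots.map (fun a => s + a)).prod := by
      have h7 : (p.roots.map (fun a => -s - a)) = ((p.roots.map (fun a => s + a)).map Neg.neg) := by
        rw [Multiset.map_map]
        apply Multiset.map_congr rfl
        intro a _
        simp only [Function.comp_apply]
        ring
      rw [h7, Multiset.prod_map_neg, Multiset.card_map, hcard, ← mul_assoc, ← mul_pow]
      simp
    rw [hnegprod, ← Multiset.prod_map_mul]
    rw [Polynomial.eval_multiset_prod, Multiset.map_map, Multiset.map_map]
    apply congrArg
    apply Multiset.map_congr rfl
    intro a _
    simp only [Function.comp_apply, Polynomial.eval_sub, Polynomial.eval_X, Polynomial.eval_C]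
    rw [← hs]
    ring
  rw [key, Polynomial.roots_multiset_prod_X_sub_C]

lemma my_roots_real_of_hermitian {M : Matrix n n ℂ} (hM : Mᴴ = M) :
    ∀ z ∈ M.charpoly.roots, z.im = 0 := by
  intro z hz
  have hroot : M.charpoly.eval z = 0 := Polynomial.isRoot_of_mem_roots hz
  rw [my_eval_charpoly] at hroot
  obtain ⟨v, hv0, hv⟩ := (Matrix.exists_mulVec_eq_zero_iff).mpr hroot
  have hMv : M *ᵥ v = z • v := by
    have h1 : (z • (1 : Matrix n n ℂ)) *ᵥ v - M *ᵥ v = 0 := by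
      rw [← Matrix.sub_mulVec]; exact hv
    have h2 : (z • (1 : Matrix n n ℂ)) *ᵥ v = z • v := by
      rw [Matrix.smul_mulVec, Matrix.one_mulVec]
    rw [h2] at h1
    linear_combination (norm := module) -h1
  set r : ℂ := star v ⬝ᵥ v with hr
  have hrne : r ≠ 0 := fun h => hv0 (dotProduct_star_self_eq_zero.mp h)
  have hrstar : star r = r := (Matrix.star_dotProduct v v).symm
  have hc : star v ⬝ᵥ (M *ᵥ v) = z * r := by
    rw [hMv, dotProduct_smul, smul_eq_mul]
  have h5 : star (M *ᵥ v) ⬝ᵥ v = star v ⬝ᵥ (M *ᵥ v) := by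
    rw [Matrix.star_mulVec, hM, ← Matrix.dotProduct_mulVec]
  have hcstar : star v ⬝ᵥ (M *ᵥ v) = star (star v ⬝ᵥ (M *ᵥ v)) := by
    conv_lhs => rw [Matrix.star_dotProduct, h5]
  rw [hc, star_mul', hrstar] at hcstar
  have hzz : z = star z := mul_right_cancel₀ hrne hcstar
  exact Complex.conj_eq_iff_im.mp hzz.symm

end auxCrossGramian

/-- For a symmetric system, `W_X² = W_C W_O`; consequently the multiset of complex
eigenvalues of `W_C W_O` is the multiset of squares of the eigenvalues of `W_X`,
and the Hankel singular values `σᵢ = √λᵢ(W_C W_O)` satisfy `σᵢ = |λᵢ(W_X)|`. -/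
theorem crossGramian_sq_eq_gramian_prod {N M : ℕ}
    (A : Matrix (Fin N) (Fin N) ℝ) (B : Matrix (Fin N) (Fin M) ℝ)
    (C : Matrix (Fin M) (Fin N) ℝ) (hA : IsHurwitz A)
    (P : Matrix (Fin N) (Fin N) ℝ) (hPsymm : Pᵀ = P) (hPinv : IsUnit P)
    (hPA : P * A = Aᵀ * P) (hPB : P * B = Cᵀ)
    (WX WC WO : Matrix (Fin N) (Fin N) ℝ)
    (hWX : WX = ∫ t in Set.Ioi (0 : ℝ), NormedSpace.exp (t • A) * B * C * NormedSpace.exp (t • A))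
    (hWC : WC = ∫ t in Set.Ioi (0 : ℝ), NormedSpace.exp (t • A) * B * Bᵀ * NormedSpace.exp (t • Aᵀ))
    (hWO : WO = ∫ t in Set.Ioi (0 : ℝ), NormedSpace.exp (t • Aᵀ) * Cᵀ * C * NormedSpace.exp (t • A)) :
    WX * WX = WC * WO ∧
      ((WC * WO).map Complex.ofReal).charpoly.roots =
        (WX.map Complex.ofReal).charpoly.roots.map (fun z => z ^ 2) ∧
      ((WC * WO).map Complex.ofReal).charpoly.roots.map (fun z => Real.sqrt z.re) =
        (WX.map Complex.ofReal).charpoly.roots.map (fun z => ‖z‖) := by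
  have hdet : IsUnit P.det := (Matrix.isUnit_iff_isUnit_det P).mp hPinv
  have hPQ : P * P⁻¹ = 1 := Matrix.mul_nonsing_inv P hdet
  have hQP : P⁻¹ * P = 1 := Matrix.nonsing_inv_mul P hdet
  have hcan1 : ∀ X : Matrix (Fin N) (Fin N) ℝ, P⁻¹ * (P * X) = X := fun X => by
    rw [← mul_assoc, hQP, one_mul]
  have hcan2 : ∀ X : Matrix (Fin N) (Fin N) ℝ, P * (P⁻¹ * X) = X := fun X => by
    rw [← mul_assoc, hPQ, one_mul]
  have hAt : P * A * P⁻¹ = Aᵀ := by rw [hPA, mul_assoc, hPQ, mul_one]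
  have hexpE : ∀ t : ℝ, NormedSpace.exp (t • Aᵀ) = P * NormedSpace.exp (t • A) * P⁻¹ := by
    intro t
    have h1 : t • Aᵀ = P * (t • A) * P⁻¹ := by
      rw [mul_smul_comm, smul_mul_assoc, hAt]
    rw [h1, Matrix.exp_conj P (t • A) hPinv]
  have hC : C = Bᵀ * P := by
    have h := congrArg Matrix.transpose hPB
    rw [Matrix.transpose_mul, hPsymm, Matrix.transpose_transpose] at h
    exact h.symm
  set f : ℝ → Matrix (Fin N) (Fin N) ℝ :=
    fun t => NormedSpace.exp (t • A) * B * Bᵀ * NormedSpace.exp (t • Aᵀ) with hf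
  have h1 : ∀ t : ℝ, NormedSpace.exp (t • A) * B * C * NormedSpace.exp (t • A) = f t * P := by
    intro t
    simp only [hf]
    rw [hC, hexpE t]
    simp only [Matrix.mul_assoc, hcan1, hcan2, hQP, hPQ, mul_one, one_mul]
  have h2 : ∀ t : ℝ, NormedSpace.exp (t • Aᵀ) * Cᵀ * C * NormedSpace.exp (t • A) = P * f t * P := by
    intro t
    simp only [hf]
    rw [← hPB, hC, hexpE t]
    simp only [Matrix.mul_assoc, hcan1, hcan2, hQP, hPQ, mul_one, one_mul]
  have hftrans : ∀ t : ℝ, (f t)ᵀ = f t := by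
    intro t
    have hexpT : (NormedSpace.exp (t • A))ᵀ = NormedSpace.exp (t • Aᵀ) := by
      rw [← Matrix.transpose_smul, Matrix.exp_transpose]
    have hexpT' : (NormedSpace.exp (t • Aᵀ))ᵀ = NormedSpace.exp (t • A) := by
      rw [← Matrix.transpose_smul, Matrix.exp_transpose, Matrix.transpose_transpose]
    simp only [hf]
    simp only [Matrix.transpose_mul, Matrix.transpose_transpose, hexpT, hexpT', Matrix.mul_assoc]
  -- continuous linear equivs
  let eR : Matrix (Fin N) (Fin N) ℝ ≃ₗ[ℝ] Matrix (Fin N) (Fin N) ℝ :=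
    LinearEquiv.ofLinear (LinearMap.mulRight ℝ P) (LinearMap.mulRight ℝ P⁻¹)
      (by ext X; simp [mul_assoc, hQP]) (by ext X; simp [mul_assoc, hPQ])
  let eL : Matrix (Fin N) (Fin N) ℝ ≃ₗ[ℝ] Matrix (Fin N) (Fin N) ℝ :=
    LinearEquiv.ofLinear (LinearMap.mulLeft ℝ P) (LinearMap.mulLeft ℝ P⁻¹)
      (by ext X; simp [hcan2]) (by ext X; simp [hcan1])
  have hWXval : WX = WC * P := by
    rw [hWX, hWC]
    calc (∫ t in Set.Ioi (0:ℝ), NormedSpace.exp (t • A) * B * C * NormedSpace.exp (t • A))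
        = ∫ t in Set.Ioi (0:ℝ), (eR.toContinuousLinearEquiv : Matrix (Fin N) (Fin N) ℝ →
            Matrix (Fin N) (Fin N) ℝ) (f t) := by
          apply integral_congr_ae
          filter_upwards with t
          rw [h1 t]
          simp [eR]
      _ = eR.toContinuousLinearEquiv (∫ t in Set.Ioi (0:ℝ), f t) :=
          ContinuousLinearEquiv.integral_comp_comm eR.toContinuousLinearEquiv f
      _ = (∫ t in Set.Ioi (0:ℝ), f t) * P := by simp [eR]
  have hWOval : WO = P * WC * P := by
    rw [hWO, hWC]
    calc (∫ t in Set.Ioi (0:ℝ), NormedSpace.exp (t • Aᵀ) * Cᵀ * C * NormedSpace.exp (t • A))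
        = ∫ t in Set.Ioi (0:ℝ), ((eL.trans eR).toContinuousLinearEquiv :
            Matrix (Fin N) (Fin N) ℝ → Matrix (Fin N) (Fin N) ℝ) (f t) := by
          apply integral_congr_ae
          filter_upwards with t
          rw [h2 t]
          simp [eR, eL]
      _ = (eL.trans eR).toContinuousLinearEquiv (∫ t in Set.Ioi (0:ℝ), f t) :=
          ContinuousLinearEquiv.integral_comp_comm _ f
      _ = P * (∫ t in Set.Ioi (0:ℝ), f t) * P := by simp [eR, eL]
  have hWCsym : WCᵀ = WC := by
    rw [hWC]
    have eT := (Matrix.transposeLinearEquiv (Fin N) (Fin N) ℝ ℝ).toContinuousLinearEquiv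
    calc (∫ t in Set.Ioi (0:ℝ), f t)ᵀ
        = (Matrix.transposeLinearEquiv (Fin N) (Fin N) ℝ ℝ).toContinuousLinearEquiv
            (∫ t in Set.Ioi (0:ℝ), f t) := by simp [Matrix.transposeLinearEquiv]
      _ = ∫ t in Set.Ioi (0:ℝ), (Matrix.transposeLinearEquiv (Fin N) (Fin N) ℝ
            ℝ).toContinuousLinearEquiv (f t) :=
          (ContinuousLinearEquiv.integral_comp_comm _ f).symm
      _ = ∫ t in Set.Ioi (0:ℝ), f t := by
          apply integral_congr_ae
          filter_upwards with t
          simp [Matrix.transposeLinearEquiv, hftrans t]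
  -- positive semidefiniteness of WC
  have hpsd : WC.PosSemidef := by
    refine Matrix.PosSemidef.of_dotProduct_mulVec_nonneg ?_ ?_
    · show WCᴴ = WC
      rw [Matrix.conjTranspose_eq_transpose_of_trivial]
      exact hWCsym
    · intro x
      rw [star_trivial]
      by_cases hint : @Integrable _ UniformSpace.toTopologicalSpace SeminormedAddGroup.toContinuousENorm _ _ f (volume.restrict (Set.Ioi 0))
      · let φ : Matrix (Fin N) (Fin N) ℝ →ₗ[ℝ] ℝ :=
          { toFun := fun Y => x ⬝ᵥ (Y *ᵥ x)
            map_add' := fun Y Z => by simp [Matrix.add_mulVec, dotProduct_add]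
            map_smul' := fun c Y => by
              simp [Matrix.smul_mulVec, dotProduct_smul] }
        have hswap := ContinuousLinearMap.integral_comp_comm
          (LinearMap.toContinuousLinearMap φ) hint
        have hval : x ⬝ᵥ (WC *ᵥ x)
            = ∫ t in Set.Ioi (0:ℝ), x ⬝ᵥ (f t *ᵥ x) := by
          rw [hWC]
          exact (hswap.trans rfl).symm
        rw [hval]
        apply integral_nonneg
        intro t
        have hrw : f t = (NormedSpace.exp (t • A) * B) * (NormedSpace.exp (t • A) * B)ᵀ := by
          have hexpT : (NormedSpace.exp (t • A))ᵀ = NormedSpace.exp (t • Aᵀ) := by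
            rw [← Matrix.transpose_smul, Matrix.exp_transpose]
          simp only [hf]
          rw [Matrix.transpose_mul, hexpT, Matrix.mul_assoc]
        show (0:ℝ) ≤ x ⬝ᵥ (f t *ᵥ x)
        rw [hrw]
        set G := NormedSpace.exp (t • A) * B with hG
        have : x ⬝ᵥ ((G * Gᵀ) *ᵥ x) = (Gᵀ *ᵥ x) ⬝ᵥ (Gᵀ *ᵥ x) := by
          rw [← Matrix.mulVec_mulVec, Matrix.dotProduct_mulVec]
          congr 1
          rw [← Matrix.vecMul_transpose, Matrix.transpose_transpose]
        rw [this]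
        exact dotProduct_star_self_nonneg _
      · rw [hWC, integral_undef hint]
        simp
  -- square root of WC
  obtain ⟨S, hSS, hSsym⟩ : ∃ S : Matrix (Fin N) (Fin N) ℝ, S * S = WC ∧ Sᵀ = S := by
    open scoped MatrixOrder in
    exact ⟨CFC.sqrt WC, CFC.sqrt_mul_sqrt_self WC hpsd.nonneg, by
      have := (CFC.sqrt_nonneg WC).posSemidef.isHermitian
      rwa [Matrix.IsHermitian, Matrix.conjTranspose_eq_transpose_of_trivial] at this⟩
  have hcharWX : WX.charpoly = (S * P * S).charpoly := by
    calc WX.charpoly = (S * (S * P)).charpoly := by rw [hWXval, ← hSS, Matrix.mul_assoc]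
      _ = ((S * P) * S).charpoly := my_charpoly_mul_comm S (S * P)
  have hsym2 : (S * P * S)ᵀ = S * P * S := by
    rw [Matrix.transpose_mul, Matrix.transpose_mul, hSsym, hPsymm, Matrix.mul_assoc]
  -- realness of eigenvalues of WX
  have hreal : ∀ z ∈ ((WX.map Complex.ofReal)).charpoly.roots, z.im = 0 := by
    have hch : (WX.map Complex.ofReal).charpoly
        = ((S * P * S).map Complex.ofReal).charpoly := by
      have e1 : WX.map Complex.ofReal = WX.map Complex.ofRealHom := rfl
      have e2 : (S * P * S).map Complex.ofReal = (S * P * S).map Complex.ofRealHom := rfl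
      rw [e1, e2, Matrix.charpoly_map, Matrix.charpoly_map, hcharWX]
    rw [hch]
    apply my_roots_real_of_hermitian
    ext i j
    simp [Matrix.conjTranspose_apply, Complex.conj_ofReal]
    have h9 : (S * P * S)ᵀ i j = (S * P * S) i j := by rw [hsym2]
    rw [Matrix.transpose_apply] at h9
    exact h9
  -- main identity
  have hmain : WX * WX = WC * WO := by
    rw [hWXval, hWOval, hWC]
    simp only [Matrix.mul_assoc]
  -- complexification
  have hmap : (WC * WO).map Complex.ofReal
      = (WX.map Complex.ofReal) * (WX.map Complex.ofReal) := by
    rw [← hmain]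
    exact Matrix.map_mul (f := Complex.ofRealHom)
  have hroots : ((WC * WO).map Complex.ofReal).charpoly.roots =
      (WX.map Complex.ofReal).charpoly.roots.map (fun z => z ^ 2) := by
    rw [hmap, my_charpoly_sq_roots]
  refine ⟨hmain, hroots, ?_⟩
  rw [hroots, Multiset.map_map]
  apply Multiset.map_congr rfl
  intro z hz
  have hz0 : z.im = 0 := hreal z hz
  simp only [Function.comp_apply]
  have h2re : (z ^ 2).re = z.re ^ 2 := by
    rw [pow_two, Complex.mul_re, hz0]
    ring
  rw [h2re, Real.sqrt_sq_eq_abs]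
  have hzre : z = (z.re : ℂ) := Complex.ext rfl hz0
  rw [hzre, Complex.norm_real]
  simp
end

section
/- Let A ∈ ℝ^{N×N} be Hurwitz, B ∈ ℝ^{N×M}, C ∈ ℝ^{M×N}, and let c_1,…,c_K and d_1,…,d_L be nonzero real numbers. For each k, m let x^{km}(t) = exp(tA)·(c_k·B·e_m) ∈ ℝ^N be the state impulse response to the input u^{km}(t) = c_k e_m δ(t), and for each l, j let y^{lj}(t) = C·exp(tA)·(d_l·e_j) ∈ ℝ^M be the output response to the initial state x_0^{lj} = d_l e_j with zero input (here e_m, e_j are standard basis vectors; since A is Hurwitz the temporal averages of these trajectories are zero). Define Ψ^{klm}_{ij}(t) = x^{km}_i(t) · y^{lj}_m(t). Then for every pair (k, l), the matrix (1/(c_k d_l)) · Σ_{m=1}^{M} ∫₀^∞ Ψ^{klm}(t) dt equals the cross Gramian W_X = ∫₀^∞ exp(tA) B C exp(tA) dt; consequently the empirical cross Gramian, the average (1/(K·L)) Σ_{k=1}^K Σ_{l=1}^L of these matrices, equals W_X. -/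
set_option maxHeartbeats 1000000

open MeasureTheory Matrix NormedSpace

section CrossGramianAux

variable {n : ℕ}

attribute [local instance] Matrix.linftyOpNormedAddCommGroup Matrix.linftyOpNormedRing
  Matrix.linftyOpNormedAlgebra

lemma entry_le_linfty (X : Matrix (Fin n) (Fin n) ℂ) (i j : Fin n) : ‖X i j‖ ≤ ‖X‖ := by
  have h1 : ‖X i j‖₊ ≤ ∑ k : Fin n, ‖X i k‖₊ :=
    Finset.single_le_sum (f := fun k => ‖X i k‖₊) (fun _ _ => by positivity) (Finset.mem_univ j)
  have h2 : (∑ k : Fin n, ‖X i k‖₊) ≤ ‖X‖₊ := by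
    rw [Matrix.linfty_opNNNorm_def]
    exact Finset.le_sup (f := fun i' => ∑ k, ‖X i' k‖₊) (Finset.mem_univ i)
  exact_mod_cast h1.trans h2

lemma decay_aux (M : Matrix (Fin n) (Fin n) ℂ) {ε : ℝ} (hε : 0 < ε) :
    ∀ l : List ℂ, (∀ r ∈ l, r.re ≤ -(2 * ε)) →
      ∀ P : Matrix (Fin n) (Fin n) ℂ, (l.map (fun r => M - r • 1)).prod * P = 0 →
      ∃ c : ℝ, 0 ≤ c ∧ ∀ t : ℝ, 0 ≤ t →
        ‖NormedSpace.exp (t • M) * P‖ ≤ c * Real.exp (-ε * t) := by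
  intro l
  induction l with
  | nil =>
    intro _ P hP
    rw [List.map_nil, List.prod_nil, one_mul] at hP
    exact ⟨0, le_rfl, fun t ht => by simp [hP]⟩
  | cons r l ih =>
    intro hre P hP
    have hrre : r.re ≤ -(2 * ε) := hre r List.mem_cons_self
    set β : ℝ := -r.re - ε with hβdef
    have hβε : ε ≤ β := by simp only [hβdef]; linarith
    have hβ0 : 0 < β := lt_of_lt_of_le hε hβε
    have hcomm : Commute (M - r • 1) ((l.map (fun s => M - s • 1)).prod) := by
      apply Commute.list_prod_right
      intro X hX
      obtain ⟨s, _, rfl⟩ := List.mem_map.mp hX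
      exact Commute.sub_right
        (Commute.sub_left (Commute.refl M) ((Commute.one_left M).smul_left r))
        (((Commute.one_right M).sub_left ((Commute.one_right (r • (1 : Matrix (Fin n) (Fin n) ℂ))))).smul_right s)
    have hP' : (l.map (fun s => M - s • 1)).prod * ((M - r • 1) * P) = 0 := by
      rw [List.map_cons, List.prod_cons, mul_assoc] at hP
      rw [← mul_assoc, ← hcomm.eq, mul_assoc]
      exact hP
    obtain ⟨c₁, hc₁0, hc₁⟩ := ih (fun s hs => hre s (List.mem_cons_of_mem r hs)) _ hP'
    refine ⟨‖P‖ + c₁ / ε, by positivity, fun t ht => ?_⟩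
    set E : ℝ → Matrix (Fin n) (Fin n) ℂ := fun s => NormedSpace.exp (s • M) with hE
    have hG : ∀ s : ℝ, HasDerivAt (fun u => E u * P) (E s * M * P) s := fun s =>
      (hasDerivAt_exp_smul_const (𝕂 := ℝ) M s).mul_const P
    have hf : ∀ s : ℝ, HasDerivAt (fun u : ℝ => Complex.exp (-(r * u)))
        (-r * Complex.exp (-(r * s))) s := by
      intro s
      have h1 : HasDerivAt (fun u : ℝ => -(r * (u : ℂ))) (-r) s := by
        simpa [Pi.neg_def] using ((Complex.ofRealCLM.hasDerivAt (x := s)).const_mul r).neg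
      simpa [mul_comm] using h1.cexp
    have hK : ∀ s : ℝ, HasDerivAt (fun u : ℝ => Complex.exp (-(r * u)) • (E u * P))
        (Complex.exp (-(r * s)) • (E s * ((M - r • 1) * P))) s := by
      intro s
      have h := (hf s).smul (hG s)
      refine h.congr_deriv ?_
      have h2 : E s * ((M - r • 1) * P) = E s * M * P - r • (E s * P) := by
        rw [sub_mul, smul_mul_assoc, one_mul, mul_sub, mul_smul_comm, ← mul_assoc]
      rw [h2]
      module
    have hcontE : Continuous E := continuous_iff_continuousAt.2 fun s =>
      (hasDerivAt_exp_smul_const (𝕂 := ℝ) M s).continuousAt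
    have hcontc : Continuous fun s : ℝ => Complex.exp (-(r * s)) :=
      Complex.continuous_exp.comp (by continuity)
    have hcontD : Continuous (fun s : ℝ => Complex.exp (-(r * s)) • (E s * ((M - r • 1) * P))) :=
      hcontc.smul (hcontE.mul continuous_const)
    have key : Complex.exp (-(r * t)) • (E t * P) =
        P + ∫ s in (0:ℝ)..t, Complex.exp (-(r * s)) • (E s * ((M - r • 1) * P)) := by
      have h := intervalIntegral.integral_eq_sub_of_hasDerivAt
        (f := fun u : ℝ => Complex.exp (-(r * u)) • (E u * P))
        (fun s _ => hK s) (hcontD.intervalIntegrable 0 t)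
      have h0 : Complex.exp (-(r * ((0:ℝ):ℂ))) • (E 0 * P) = P := by
        simp [hE, zero_smul, exp_zero]
      rw [h0] at h
      rw [h]
      abel
    have hnorm : ∀ s : ℝ, ‖Complex.exp (-(r * s)) • (E s * ((M - r • 1) * P))‖
        = Real.exp (-r.re * s) * ‖E s * ((M - r • 1) * P)‖ := by
      intro s
      rw [norm_smul, Complex.norm_exp]
      congr 2
      simp
    have hIntExp : ∫ s in (0:ℝ)..t, Real.exp (β * s) = (Real.exp (β * t) - 1) / β := by
      have hd : ∀ s : ℝ, HasDerivAt (fun u : ℝ => Real.exp (β * u) / β)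
          (Real.exp (β * s)) s := by
        intro s
        have h1 : HasDerivAt (fun u : ℝ => β * u) β s := by
          simpa using (hasDerivAt_id s).const_mul β
        have h2 := ((Real.hasDerivAt_exp (β * s)).comp s h1).div_const β
        have h3 : Real.exp (β * s) * β / β = Real.exp (β * s) :=
          mul_div_cancel_right₀ _ hβ0.ne'
        rw [h3] at h2
        exact h2
      rw [intervalIntegral.integral_eq_sub_of_hasDerivAt (fun s _ => hd s)
        ((Real.continuous_exp.comp (continuous_const.mul continuous_id)).intervalIntegrable 0 t)]
      rw [mul_zero, Real.exp_zero]
      ring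
    have hbound : ∫ s in (0:ℝ)..t, ‖Complex.exp (-(r * s)) • (E s * ((M - r • 1) * P))‖
        ≤ c₁ * ((Real.exp (β * t) - 1) / β) := by
      rw [← hIntExp, ← intervalIntegral.integral_const_mul]
      apply intervalIntegral.integral_mono_on ht
      · exact (hcontD.norm).intervalIntegrable 0 t
      · exact (continuous_const.mul
          (Real.continuous_exp.comp (continuous_const.mul continuous_id))).intervalIntegrable 0 t
      · intro s hs
        rw [hnorm s]
        calc Real.exp (-r.re * s) * ‖E s * ((M - r • 1) * P)‖
            ≤ Real.exp (-r.re * s) * (c₁ * Real.exp (-ε * s)) :=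
              mul_le_mul_of_nonneg_left (hc₁ s hs.1) (Real.exp_nonneg _)
          _ = c₁ * (Real.exp (-r.re * s) * Real.exp (-ε * s)) := by ring
          _ = c₁ * Real.exp (β * s) := by
              rw [← Real.exp_add, hβdef]
              ring_nf
    have hKnorm : ‖Complex.exp (-(r * t)) • (E t * P)‖ ≤ ‖P‖ + c₁ * ((Real.exp (β * t) - 1) / β) := by
      rw [key]
      exact (norm_add_le _ _).trans (add_le_add_right
        ((intervalIntegral.norm_integral_le_integral_norm ht).trans hbound) _)
    have habs : ‖Complex.exp (-(r * t))‖ = Real.exp (-(r.re * t)) := by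
      rw [Complex.norm_exp]
      congr 1
      simp
    have hEt : ‖E t * P‖ = Real.exp (r.re * t) * ‖Complex.exp (-(r * t)) • (E t * P)‖ := by
      rw [norm_smul, habs, ← mul_assoc, ← Real.exp_add]
      simp
    calc ‖E t * P‖ = Real.exp (r.re * t) * ‖Complex.exp (-(r * t)) • (E t * P)‖ := hEt
      _ ≤ Real.exp (r.re * t) * (‖P‖ + c₁ * ((Real.exp (β * t) - 1) / β)) := by
          exact mul_le_mul_of_nonneg_left hKnorm (Real.exp_nonneg _)
      _ ≤ Real.exp (r.re * t) * (‖P‖ + c₁ * (Real.exp (β * t) / β)) := by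
          refine mul_le_mul_of_nonneg_left (add_le_add_right
            (mul_le_mul_of_nonneg_left ?_ hc₁0) _) (Real.exp_nonneg _)
          exact (div_le_div_iff_of_pos_right hβ0).2 (by linarith [Real.exp_pos (β * t)])
      _ = ‖P‖ * Real.exp (r.re * t) + (c₁ / β) * Real.exp (r.re * t + β * t) := by
          rw [Real.exp_add]; ring
      _ ≤ ‖P‖ * Real.exp (-ε * t) + (c₁ / ε) * Real.exp (-ε * t) := by
          have e1 : Real.exp (r.re * t) ≤ Real.exp (-ε * t) := Real.exp_le_exp.2 (by nlinarith)
          have e2 : Real.exp (r.re * t + β * t) = Real.exp (-ε * t) := by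
            rw [hβdef]; ring_nf
          have e3 : c₁ / β ≤ c₁ / ε := by gcongr
          refine add_le_add (mul_le_mul_of_nonneg_left e1 (norm_nonneg P)) ?_
          rw [e2]
          exact mul_le_mul_of_nonneg_right e3 (Real.exp_nonneg _)
      _ = (‖P‖ + c₁ / ε) * Real.exp (-ε * t) := by ring
lemma exp_entry_continuous' (A : Matrix (Fin n) (Fin n) ℝ) (i j : Fin n) :
    Continuous fun t : ℝ => NormedSpace.exp (t • A) i j := by
  have hcontE : Continuous fun t : ℝ => NormedSpace.exp (t • A) := continuous_iff_continuousAt.2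
    fun s => (hasDerivAt_exp_smul_const (𝕂 := ℝ) A s).continuousAt
  exact ((continuous_apply j).comp (continuous_apply i)).comp hcontE

lemma exp_entry_decay' (A : Matrix (Fin n) (Fin n) ℝ)
    (hA : ∀ μ ∈ spectrum ℂ (A.map Complex.ofReal), μ.re < 0) :
    ∃ c ε : ℝ, 0 < ε ∧ 0 ≤ c ∧ ∀ t : ℝ, 0 ≤ t → ∀ i j,
      |NormedSpace.exp (t • A) i j| ≤ c * Real.exp (-ε * t) := by
  set A' : Matrix (Fin n) (Fin n) ℂ := A.map Complex.ofReal with hA'def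
  have hint : IsIntegral ℂ A' := .of_finite ℂ A'
  set p := minpoly ℂ A' with hpdef
  have hmo : p.Monic := minpoly.monic hint
  have hroot : ∀ r ∈ p.roots, r.re < 0 := by
    intro r hr
    have hIsRoot : p.IsRoot r := Polynomial.isRoot_of_mem_roots hr
    have heig : Module.End.HasEigenvalue (Matrix.toLinAlgEquiv' A') r := by
      apply Module.End.hasEigenvalue_of_isRoot
      rwa [minpoly.algEquiv_eq]
    have hsp : r ∈ spectrum ℂ (Matrix.toLinAlgEquiv' A') := heig.mem_spectrum
    rw [AlgEquiv.spectrum_eq] at hsp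
    exact hA r hsp
  obtain ⟨ε, hε, hεle⟩ : ∃ ε : ℝ, 0 < ε ∧ ∀ r ∈ p.roots, r.re ≤ -(2 * ε) := by
    rcases eq_or_ne p.roots 0 with h0 | h0
    · exact ⟨1, one_pos, by simp [h0]⟩
    · have hne : p.roots.toFinset.Nonempty := by
        rwa [Multiset.toFinset_nonempty]
      have hFne : (p.roots.toFinset.image (fun r => -r.re)).Nonempty := hne.image _
      set m := (p.roots.toFinset.image (fun r => -r.re)).min' hFne with hm
      have hmpos : 0 < m := by
        obtain ⟨r, hr, hrm⟩ := Finset.mem_image.mp ((p.roots.toFinset.image _).min'_mem hFne)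
        have hrm' : m = -r.re := hm.trans hrm.symm
        have := hroot r (Multiset.mem_toFinset.mp hr)
        rw [hrm']
        linarith
      refine ⟨m / 4, by positivity, fun r hr => ?_⟩
      have hle : m ≤ -r.re :=
        Finset.min'_le _ _ (Finset.mem_image_of_mem _ (Multiset.mem_toFinset.mpr hr))
      linarith
  have hmem : ∀ r ∈ p.roots.toList, r ∈ p.roots := fun r hr => by
    rwa [← Multiset.mem_toList]
  have hprod : ((p.roots.toList.map (fun r => A' - r • 1)).prod) * 1 = 0 := by
    rw [mul_one]
    have hfac := (IsAlgClosed.splits p).eq_prod_roots_of_monic hmo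
    rw [← Multiset.coe_toList p.roots, Multiset.map_coe, Multiset.prod_coe] at hfac
    have haev : Polynomial.aeval A' p = 0 := minpoly.aeval ℂ A'
    rw [hfac, map_list_prod, List.map_map] at haev
    have hfun : ((Polynomial.aeval A') ∘ fun r => Polynomial.X - Polynomial.C r)
        = fun r : ℂ => A' - r • 1 := by
      funext r
      simp [Function.comp, Algebra.algebraMap_eq_smul_one]
    rw [hfun] at haev
    exact haev
  obtain ⟨c, hc0, hdecay⟩ := decay_aux A' hε p.roots.toList
    (fun r hr => hεle r (hmem r hr)) 1 hprod
  refine ⟨c, ε, hε, hc0, fun t ht i j => ?_⟩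
  have h1 : ((t • A).map Complex.ofReal) = t • A' := by
    ext i' j'
    simp [hA'def]
  have hmapexp : (NormedSpace.exp (t • A)).map Complex.ofReal = NormedSpace.exp (t • A') := by
    rw [← h1]
    exact NormedSpace.map_exp (Complex.ofRealHom.mapMatrix (m := Fin n)) (by
      apply continuous_matrix
      intro i' j'
      exact Complex.continuous_ofReal.comp
        ((continuous_apply j').comp (continuous_apply i'))) (t • A)
  have hentry : (Complex.ofReal (NormedSpace.exp (t • A) i j)) = NormedSpace.exp (t • A') i j := by
    rw [← hmapexp]; rfl
  have := entry_le_linfty (NormedSpace.exp (t • A')) i j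
  rw [← hentry] at this
  rw [Complex.norm_real, Real.norm_eq_abs] at this
  refine this.trans ?_
  have := hdecay t ht
  rwa [mul_one] at this

end CrossGramianAux

attribute [local instance] Matrix.normedAddCommGroup Matrix.normedSpace

/-- For a linear system the empirical cross Gramian equals the cross Gramian:
for each pair of perturbation scales `(c k, d l)` the matrix
`(c k * d l)⁻¹ Σₘ ∫₀^∞ Ψ^{klm}(t) dt`, built from the state impulse responses
`x^{km}(t) = exp(tA) (c k • B eₘ)` and the output responses
`y^{lj}(t) = C exp(tA) (d l • eⱼ)` via `Ψ^{klm}_{ij}(t) = x^{km}_i(t) ⬝ y^{lj}_m(t)`,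
equals `W_X = ∫₀^∞ exp(tA) B C exp(tA) dt`; consequently so does their average,
the empirical cross Gramian. -/
theorem empirical_crossGramian_eq_crossGramian {N M K L : ℕ}
    (hK : 0 < K) (hL : 0 < L)
    (A : Matrix (Fin N) (Fin N) ℝ) (B : Matrix (Fin N) (Fin M) ℝ)
    (C : Matrix (Fin M) (Fin N) ℝ) (hA : IsHurwitz A)
    (c : Fin K → ℝ) (d : Fin L → ℝ)
    (hc : ∀ k, c k ≠ 0) (hd : ∀ l, d l ≠ 0) :
    (∀ (k : Fin K) (l : Fin L),
        (c k * d l)⁻¹ •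
            ∑ m : Fin M, ∫ t in Set.Ioi (0 : ℝ), Matrix.of (fun i j : Fin N =>
              (NormedSpace.exp (t • A) *ᵥ (c k • (B *ᵥ (Pi.single m 1 : Fin M → ℝ)))) i *
                (C *ᵥ (NormedSpace.exp (t • A) *ᵥ (d l • (Pi.single j 1 : Fin N → ℝ)))) m) =
          ∫ t in Set.Ioi (0 : ℝ), NormedSpace.exp (t • A) * B * C * NormedSpace.exp (t • A)) ∧
      ((K * L : ℝ)⁻¹ •
          ∑ k : Fin K, ∑ l : Fin L, (c k * d l)⁻¹ •
            ∑ m : Fin M, ∫ t in Set.Ioi (0 : ℝ), Matrix.of (fun i j : Fin N =>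
              (NormedSpace.exp (t • A) *ᵥ (c k • (B *ᵥ (Pi.single m 1 : Fin M → ℝ)))) i *
                (C *ᵥ (NormedSpace.exp (t • A) *ᵥ (d l • (Pi.single j 1 : Fin N → ℝ)))) m)) =
        ∫ t in Set.Ioi (0 : ℝ), NormedSpace.exp (t • A) * B * C * NormedSpace.exp (t • A) := by
  obtain ⟨c₀, ε, hε, hc₀, hdec⟩ := exp_entry_decay' A hA
  have key1 : ∀ (k : Fin K) (l : Fin L),
      (c k * d l)⁻¹ •
          ∑ m : Fin M, ∫ t in Set.Ioi (0 : ℝ), Matrix.of (fun i j : Fin N =>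
            (NormedSpace.exp (t • A) *ᵥ (c k • (B *ᵥ (Pi.single m 1 : Fin M → ℝ)))) i *
              (C *ᵥ (NormedSpace.exp (t • A) *ᵥ (d l • (Pi.single j 1 : Fin N → ℝ)))) m) =
        ∫ t in Set.Ioi (0 : ℝ), NormedSpace.exp (t • A) * B * C * NormedSpace.exp (t • A) := by
    intro k l
    letI : ContinuousENorm (Matrix (Fin N) (Fin N) ℝ) := SeminormedAddGroup.toContinuousENorm
    haveI : TopologicalSpace.PseudoMetrizableSpace (Matrix (Fin N) (Fin N) ℝ) :=
      TopologicalSpace.pseudoMetrizableSpace_pi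
    have hent : ∀ (m : Fin M) (t : ℝ), (Matrix.of (fun i j : Fin N =>
        (NormedSpace.exp (t • A) *ᵥ (c k • (B *ᵥ (Pi.single m 1 : Fin M → ℝ)))) i *
          (C *ᵥ (NormedSpace.exp (t • A) *ᵥ (d l • (Pi.single j 1 : Fin N → ℝ)))) m))
        = (c k * d l) • Matrix.of (fun i j : Fin N =>
            (NormedSpace.exp (t • A) * B) i m * (C * NormedSpace.exp (t • A)) m j) := by
      intro m t
      ext i j
      have e1 : (NormedSpace.exp (t • A) *ᵥ (c k • (B *ᵥ (Pi.single m 1 : Fin M → ℝ)))) i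
          = c k * ((NormedSpace.exp (t • A) * B) i m) := by
        rw [Matrix.mulVec_smul, Matrix.mulVec_mulVec, Matrix.mulVec_single]
        simp
      have e2 : (C *ᵥ (NormedSpace.exp (t • A) *ᵥ (d l • (Pi.single j 1 : Fin N → ℝ)))) m
          = d l * ((C * NormedSpace.exp (t • A)) m j) := by
        rw [Matrix.mulVec_smul, Matrix.mulVec_smul, Matrix.mulVec_mulVec,
          Matrix.mulVec_single]
        simp
      rw [Matrix.of_apply, e1, e2, Matrix.smul_apply, Matrix.of_apply, smul_eq_mul]
      ring
    have hXB : ∀ (i : Fin N) (m : Fin M), Continuous fun t : ℝ => (NormedSpace.exp (t • A) * B) i m := by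
      intro i m
      simp only [Matrix.mul_apply]
      exact continuous_finset_sum _ fun a _ => (exp_entry_continuous' A i a).mul continuous_const
    have hCX : ∀ (m : Fin M) (j : Fin N), Continuous fun t : ℝ => (C * NormedSpace.exp (t • A)) m j := by
      intro m j
      simp only [Matrix.mul_apply]
      exact continuous_finset_sum _ fun b _ => continuous_const.mul (exp_entry_continuous' A b j)
    set SB : ℝ := ∑ a : Fin N, ∑ m' : Fin M, |B a m'| with hSB
    set SC : ℝ := ∑ m' : Fin M, ∑ b : Fin N, |C m' b| with hSC
    have hSB0 : 0 ≤ SB := Finset.sum_nonneg fun _ _ => Finset.sum_nonneg fun _ _ => abs_nonneg _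
    have hSC0 : 0 ≤ SC := Finset.sum_nonneg fun _ _ => Finset.sum_nonneg fun _ _ => abs_nonneg _
    have hXBb : ∀ t : ℝ, 0 ≤ t → ∀ (i : Fin N) (m : Fin M),
        |(NormedSpace.exp (t • A) * B) i m| ≤ c₀ * Real.exp (-ε * t) * SB := by
      intro t ht i m
      rw [Matrix.mul_apply]
      refine (Finset.abs_sum_le_sum_abs _ _).trans ?_
      calc ∑ a : Fin N, |NormedSpace.exp (t • A) i a * B a m|
          ≤ ∑ a : Fin N, c₀ * Real.exp (-ε * t) * |B a m| := by
            refine Finset.sum_le_sum fun a _ => ?_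
            rw [abs_mul]
            exact mul_le_mul_of_nonneg_right (hdec t ht i a) (abs_nonneg _)
        _ = c₀ * Real.exp (-ε * t) * ∑ a : Fin N, |B a m| := by rw [Finset.mul_sum]
        _ ≤ c₀ * Real.exp (-ε * t) * SB := by
            refine mul_le_mul_of_nonneg_left ?_ (by positivity)
            exact Finset.sum_le_sum fun a _ => Finset.single_le_sum
              (f := fun m' => |B a m'|) (fun _ _ => abs_nonneg _) (Finset.mem_univ m)
    have hCXb : ∀ t : ℝ, 0 ≤ t → ∀ (m : Fin M) (j : Fin N),
        |(C * NormedSpace.exp (t • A)) m j| ≤ c₀ * Real.exp (-ε * t) * SC := by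
      intro t ht m j
      rw [Matrix.mul_apply]
      refine (Finset.abs_sum_le_sum_abs _ _).trans ?_
      calc ∑ b : Fin N, |C m b * NormedSpace.exp (t • A) b j|
          ≤ ∑ b : Fin N, |C m b| * (c₀ * Real.exp (-ε * t)) := by
            refine Finset.sum_le_sum fun b _ => ?_
            rw [abs_mul]
            exact mul_le_mul_of_nonneg_left (hdec t ht b j) (abs_nonneg _)
        _ = (∑ b : Fin N, |C m b|) * (c₀ * Real.exp (-ε * t)) := by rw [Finset.sum_mul]
        _ ≤ c₀ * Real.exp (-ε * t) * SC := by
            rw [mul_comm]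
            refine mul_le_mul_of_nonneg_left ?_ (by positivity)
            exact Finset.single_le_sum
              (f := fun m' => ∑ b : Fin N, |C m' b|)
              (fun _ _ => Finset.sum_nonneg fun _ _ => abs_nonneg _) (Finset.mem_univ m)
    have hbase : ∀ m : Fin M, IntegrableOn (fun t : ℝ => Matrix.of (fun i j : Fin N =>
        (NormedSpace.exp (t • A) * B) i m * (C * NormedSpace.exp (t • A)) m j)) (Set.Ioi (0:ℝ)) := by
      intro m
      have hcont : Continuous fun t : ℝ => Matrix.of (fun i j : Fin N =>
          (NormedSpace.exp (t • A) * B) i m * (C * NormedSpace.exp (t • A)) m j) :=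
        continuous_matrix fun i j => (hXB i m).mul (hCX m j)
      refine Integrable.mono'
        ((exp_neg_integrableOn_Ioi (0:ℝ) (b := 2 * ε) (by positivity)).const_mul
          (c₀ * SB * (c₀ * SC))) hcont.aestronglyMeasurable ?_
      filter_upwards [MeasureTheory.ae_restrict_mem measurableSet_Ioi] with t ht
      have ht' : (0:ℝ) ≤ t := le_of_lt ht
      rw [Matrix.norm_le_iff (by positivity)]
      intro i j
      have h1 := hXBb t ht' i m
      have h2 := hCXb t ht' m j
      calc ‖Matrix.of (fun i j : Fin N =>
            (NormedSpace.exp (t • A) * B) i m * (C * NormedSpace.exp (t • A)) m j) i j‖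
          = |(NormedSpace.exp (t • A) * B) i m| * |(C * NormedSpace.exp (t • A)) m j| := by
            rw [Matrix.of_apply, Real.norm_eq_abs, abs_mul]
        _ ≤ (c₀ * Real.exp (-ε * t) * SB) * (c₀ * Real.exp (-ε * t) * SC) := by
            exact mul_le_mul h1 h2 (abs_nonneg _) (by positivity)
        _ = c₀ * SB * (c₀ * SC) * (Real.exp (-ε * t) * Real.exp (-ε * t)) := by ring
        _ = c₀ * SB * (c₀ * SC) * Real.exp (-(2 * ε) * t) := by
            rw [← Real.exp_add]
            ring_nf
    have hInt : ∀ m : Fin M, IntegrableOn (fun t : ℝ => Matrix.of (fun i j : Fin N =>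
        (NormedSpace.exp (t • A) *ᵥ (c k • (B *ᵥ (Pi.single m 1 : Fin M → ℝ)))) i *
          (C *ᵥ (NormedSpace.exp (t • A) *ᵥ (d l • (Pi.single j 1 : Fin N → ℝ)))) m))
        (Set.Ioi (0:ℝ)) := by
      intro m
      rw [show (fun t : ℝ => Matrix.of (fun i j : Fin N =>
          (NormedSpace.exp (t • A) *ᵥ (c k • (B *ᵥ (Pi.single m 1 : Fin M → ℝ)))) i *
            (C *ᵥ (NormedSpace.exp (t • A) *ᵥ (d l • (Pi.single j 1 : Fin N → ℝ)))) m))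
          = (c k * d l) • (fun t : ℝ => Matrix.of (fun i j : Fin N =>
            (NormedSpace.exp (t • A) * B) i m * (C * NormedSpace.exp (t • A)) m j))
          from funext fun t => hent m t]
      exact Integrable.smul _ (hbase m)
    rw [← MeasureTheory.integral_finset_sum _ (fun m _ => hInt m)]
    have hsum : (fun t : ℝ => ∑ m : Fin M, Matrix.of (fun i j : Fin N =>
        (NormedSpace.exp (t • A) *ᵥ (c k • (B *ᵥ (Pi.single m 1 : Fin M → ℝ)))) i *
          (C *ᵥ (NormedSpace.exp (t • A) *ᵥ (d l • (Pi.single j 1 : Fin N → ℝ)))) m))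
        = fun t : ℝ => (c k * d l) • (NormedSpace.exp (t • A) * B * C * NormedSpace.exp (t • A)) := by
      funext t
      rw [Finset.sum_congr rfl (fun m _ => hent m t), ← Finset.smul_sum]
      congr 1
      ext i j
      rw [Matrix.sum_apply]
      simp only [Matrix.of_apply]
      rw [show NormedSpace.exp (t • A) * B * C * NormedSpace.exp (t • A)
          = (NormedSpace.exp (t • A) * B) * (C * NormedSpace.exp (t • A)) from by rw [Matrix.mul_assoc]]
      rw [Matrix.mul_apply]
    rw [hsum, integral_smul, smul_smul, inv_mul_cancel₀ (mul_ne_zero (hc k) (hd l)), one_smul]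
  refine ⟨key1, ?_⟩
  simp only [key1]
  rw [Finset.sum_const, Finset.sum_const, Finset.card_univ, Finset.card_univ,
    Fintype.card_fin, Fintype.card_fin, smul_smul, ← Nat.cast_smul_eq_nsmul ℝ,
    Nat.cast_mul, smul_smul, inv_mul_cancel₀, one_smul]
  exact mul_ne_zero (Nat.cast_ne_zero.mpr hK.ne') (Nat.cast_ne_zero.mpr hL.ne')
end
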